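/- arXiv:2602.22842 — 11 statements merged into one kernel-verified Lean document; each statement's English description precedes it below -/
import Mathlib

section
/- Let n ≥ 1 be an integer, let a < b be real numbers, and let f : ℝ → ℝ be (n-1)-times continuously differentiable on a neighborhood of [a,b]. Then the integral of the two-point Hermite interpolating polynomial satisfies ∫_a^b H_n(f;x) dx = Σ_{j=0}^{n-1} w_j^a f^{(j)}(a) + Σ_{j=0}^{n-1} w_j^b f^{(j)}(b), where w_j^a = (b-a)^{j+1} · n · Σ_{k=j}^{n-1} C(k,j) · (n+k-j-1)!/(n+k+1)! and w_j^b = (-1)^j w_j^a. Consequently ∫_a^b H_n(f;x) dx = Σ_{j=0}^{n-1} w_j^a [f^{(j)}(a) + (-1)^j f^{(j)}(b)]. -/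
open Finset intervalIntegral

/-- Hermite quadrature weight at `a`:
`w_j^a = (b-a)^(j+1) * n * Σ_{k=j}^{n-1} C(k,j) (n+k-j-1)!/(n+k+1)!`. -/
noncomputable def wA (n : ℕ) (a b : ℝ) (j : ℕ) : ℝ :=
  (b - a) ^ (j + 1) * n * ∑ k ∈ Finset.Icc j (n - 1),
    (k.choose j : ℝ) * (Nat.factorial (n + k - j - 1)) / (Nat.factorial (n + k + 1))

/-- Hermite quadrature weight at `b`: `w_j^b = (-1)^j w_j^a`. -/
noncomputable def wB (n : ℕ) (a b : ℝ) (j : ℕ) : ℝ := (-1 : ℝ) ^ j * wA n a b j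

/-- RIBP weight at `a`:
`α_j^a = (-1)^(j+1) [ (a+c)^(j+1)/(j+1)! + Σ_{i=0}^{j-1} δ_{i+n-1-j} a^i/i! ]`. -/
noncomputable def alphaA (n : ℕ) (a c : ℝ) (δ : ℕ → ℝ) (j : ℕ) : ℝ :=
  (-1 : ℝ) ^ (j + 1) * ((a + c) ^ (j + 1) / (Nat.factorial (j + 1)) +
    ∑ i ∈ Finset.range j, δ (i + n - 1 - j) * a ^ i / (Nat.factorial i))

/-- RIBP weight at `b`:
`α_j^b = (-1)^j [ (b+c)^(j+1)/(j+1)! + Σ_{i=0}^{j-1} δ_{i+n-1-j} b^i/i! ]`. -/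
noncomputable def alphaB (n : ℕ) (b c : ℝ) (δ : ℕ → ℝ) (j : ℕ) : ℝ :=
  (-1 : ℝ) ^ j * ((b + c) ^ (j + 1) / (Nat.factorial (j + 1)) +
    ∑ i ∈ Finset.range j, δ (i + n - 1 - j) * b ^ i / (Nat.factorial i))

/-- Polynomial kernel `P(x,θ) = (x+c)^n/n! + Σ_{i=0}^{n-2} δ_i x^i/i!`. -/
noncomputable def Pker (n : ℕ) (c : ℝ) (δ : ℕ → ℝ) (x : ℝ) : ℝ :=
  (x + c) ^ n / (Nat.factorial n) + ∑ i ∈ Finset.range (n - 1), δ i * x ^ i / (Nat.factorial i)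

/-- Two-point Hermite interpolating polynomial
`H_n(f;x) = (x-a)^n Σ_{k<n} B_k (x-b)^k/k! + (x-b)^n Σ_{k<n} A_k (x-a)^k/k!`,
where `A_k = (d/dx)^k [f(x)/(x-b)^n]` at `x = a` and `B_k = (d/dx)^k [f(x)/(x-a)^n]` at `x = b`. -/
noncomputable def hermite (n : ℕ) (a b : ℝ) (f : ℝ → ℝ) (x : ℝ) : ℝ :=
  (x - a) ^ n * ∑ k ∈ Finset.range n,
      (iteratedDeriv k (fun t => f t / (t - a) ^ n) b) * (x - b) ^ k / (Nat.factorial k)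
  + (x - b) ^ n * ∑ k ∈ Finset.range n,
      (iteratedDeriv k (fun t => f t / (t - b) ^ n) a) * (x - a) ^ k / (Nat.factorial k)

private lemma key_int : ∀ (k n : ℕ) (a b : ℝ), (∫ x in a..b, (x - a) ^ n * (x - b) ^ k)
    = (-1 : ℝ) ^ k * (Nat.factorial n) * (Nat.factorial k) / (Nat.factorial (n + k + 1))
      * (b - a) ^ (n + k + 1) := by
  intro k
  induction k with
  | zero =>
    intro n a b
    simp only [pow_zero, mul_one]
    rw [show (fun x : ℝ => (x - a) ^ n) = (fun x : ℝ => (fun y : ℝ => y ^ n) (x - a)) from rfl]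
    rw [intervalIntegral.integral_comp_sub_right (fun y : ℝ => y ^ n) a]
    rw [integral_pow]
    simp [Nat.factorial_succ]
    field_simp
  | succ k IH =>
    intro n a b
    have hu : ∀ x ∈ Set.uIcc a b, HasDerivAt (fun y : ℝ => (y - b) ^ (k + 1))
        (((k : ℝ) + 1) * (x - b) ^ k) x := by
      intro x _
      have h := ((hasDerivAt_pow (k + 1) (x - b)).comp x ((hasDerivAt_id x).sub_const b))
      simpa [Function.comp_def] using h
    have hv : ∀ x ∈ Set.uIcc a b, HasDerivAt (fun y : ℝ => (y - a) ^ (n + 1) / ((n : ℝ) + 1))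
        ((x - a) ^ n) x := by
      intro x _
      have h := (((hasDerivAt_pow (n + 1) (x - a)).comp x ((hasDerivAt_id x).sub_const a)).div_const ((n : ℝ) + 1))
      refine h.congr_deriv ?_
      push_cast
      field_simp
    have hint1 : IntervalIntegrable (fun x : ℝ => ((k : ℝ) + 1) * (x - b) ^ k) MeasureTheory.volume a b := by
      apply Continuous.intervalIntegrable; fun_prop
    have hint2 : IntervalIntegrable (fun x : ℝ => (x - a) ^ n) MeasureTheory.volume a b := by
      apply Continuous.intervalIntegrable; fun_prop
    have hparts := intervalIntegral.integral_mul_deriv_eq_deriv_mul hu hv hint1 hint2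
    have hLHS : (∫ x in a..b, (x - a) ^ n * (x - b) ^ (k+1))
        = ∫ x in a..b, (x - b) ^ (k+1) * (x - a) ^ n := by
      apply intervalIntegral.integral_congr; intro x _; ring
    rw [hLHS, hparts]
    have h2 : (∫ x in a..b, ((k : ℝ) + 1) * (x - b) ^ k * ((x - a) ^ (n+1) / ((n:ℝ)+1)))
        = ((k : ℝ) + 1) / ((n : ℝ) + 1) * ∫ x in a..b, (x - a) ^ (n+1) * (x - b) ^ k := by
      rw [← intervalIntegral.integral_const_mul]
      apply intervalIntegral.integral_congr; intro x _; ring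
    rw [h2, IH (n + 1) a b]
    have e1 : ((b : ℝ) - b) = 0 := by ring
    have e2 : ((a : ℝ) - a) = 0 := by ring
    rw [e1, e2]
    simp only [zero_pow (Nat.succ_ne_zero k), zero_pow (Nat.succ_ne_zero n), zero_mul, mul_zero, zero_div, sub_zero, zero_sub]
    have harr : n + (k + 1) + 1 = n + 1 + k + 1 := by omega
    rw [harr]
    have hfn : (Nat.factorial (n+1) : ℝ) = ((n:ℝ)+1) * Nat.factorial n := by
      rw [Nat.factorial_succ]; push_cast; ring
    have hfk : (Nat.factorial (k+1) : ℝ) = ((k:ℝ)+1) * Nat.factorial k := by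
      rw [Nat.factorial_succ]; push_cast; ring
    rw [hfn, hfk]
    have h3 : ((n:ℝ)+1) ≠ 0 := by positivity
    field_simp
    ring

private lemma iterWithin_eq {f : ℝ → ℝ} {U : Set ℝ} (hU : IsOpen U) {j : ℕ} {x : ℝ} (hx : x ∈ U) :
    iteratedDerivWithin j f U x = iteratedDeriv j f x := by
  simp only [iteratedDerivWithin, iteratedDeriv, iteratedFDerivWithin_of_isOpen j hU hx]

private lemma hasDerivAt_iter {m : ℕ} {f : ℝ → ℝ} {U : Set ℝ} (hU : IsOpen U)
    (hf : ContDiffOn ℝ (m : ℕ∞) f U) {j : ℕ} (hj : j < m) {x : ℝ} (hx : x ∈ U) :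
    HasDerivAt (iteratedDeriv j f) (iteratedDeriv (j + 1) f x) x := by
  have hdo : DifferentiableOn ℝ (iteratedDerivWithin j f U) U :=
    hf.differentiableOn_iteratedDerivWithin (by exact_mod_cast hj) hU.uniqueDiffOn
  have hdiff : DifferentiableAt ℝ (iteratedDeriv j f) x := by
    have h1 : DifferentiableAt ℝ (iteratedDerivWithin j f U) x :=
      (hdo x hx).differentiableAt (hU.mem_nhds hx)
    apply h1.congr_of_eventuallyEq
    filter_upwards [hU.mem_nhds hx] with y hy
    exact (iterWithin_eq hU hy).symm
  rw [iteratedDeriv_succ]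
  exact hdiff.hasDerivAt

private lemma leibniz_formula (n m : ℕ) (hn : 1 ≤ n) {U : Set ℝ} (hU : IsOpen U) {f : ℝ → ℝ}
    (hf : ContDiffOn ℝ (m : ℕ∞) f U) (c : ℝ) :
    ∀ k, k ≤ m → ∀ x ∈ U, x ≠ c →
      iteratedDeriv k (fun t => f t / (t - c) ^ n) x =
        ∑ j ∈ Finset.range (k + 1), (k.choose j : ℝ) * iteratedDeriv j f x *
          ((-1 : ℝ) ^ (k - j) * (Nat.factorial (n + k - j - 1)) / (Nat.factorial (n - 1))) *
          (x - c) ^ ((j : ℤ) - n - k) := by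
  intro k
  induction k with
  | zero =>
    intro _ x hx hxc
    have hsub : x - c ≠ 0 := sub_ne_zero.2 hxc
    simp only [iteratedDeriv_zero, zero_add, Finset.sum_range_one]
    rw [show ((0 : ℕ) : ℤ) - (n : ℤ) - ((0:ℕ) : ℤ) = -(n : ℤ) by push_cast; ring]
    rw [zpow_neg, zpow_natCast]
    have : n + 0 - 0 - 1 = n - 1 := by omega
    rw [this]
    have hfac : (Nat.factorial (n-1) : ℝ) ≠ 0 := Nat.cast_ne_zero.2 (Nat.factorial_ne_zero _)
    field_simp
    simp
  | succ k IH =>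
    intro hk1 x hx hxc
    have hk : k ≤ m := by omega
    set g : ℝ → ℝ := fun t => f t / (t - c) ^ n with hg
    -- the open set where the formula for iteratedDeriv k g holds
    set V : Set ℝ := U ∩ {y | y ≠ c} with hV
    have hVopen : IsOpen V := hU.inter (isOpen_compl_singleton)
    have hxV : x ∈ V := ⟨hx, hxc⟩
    set S : ℝ → ℝ := fun y => ∑ j ∈ Finset.range (k + 1), (k.choose j : ℝ) * iteratedDeriv j f y *
          ((-1 : ℝ) ^ (k - j) * (Nat.factorial (n + k - j - 1)) / (Nat.factorial (n - 1))) *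
          (y - c) ^ ((j : ℤ) - n - k) with hS
    have hev : iteratedDeriv k g =ᶠ[nhds x] S := by
      filter_upwards [hVopen.mem_nhds hxV] with y hy
      exact IH hk y hy.1 hy.2
    rw [iteratedDeriv_succ, hev.deriv_eq]
    -- derivative of S
    have hDS : HasDerivAt S
        (∑ j ∈ Finset.range (k + 1),
          ((k.choose j : ℝ) * ((-1 : ℝ) ^ (k - j) * (Nat.factorial (n + k - j - 1)) / (Nat.factorial (n - 1)))) *
          (iteratedDeriv (j+1) f x * (x - c) ^ ((j : ℤ) - n - k)
            + iteratedDeriv j f x * (((j : ℤ) - n - k) * (x - c) ^ ((j : ℤ) - n - k - 1)))) x := by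
      apply HasDerivAt.fun_sum
      intro j hj
      have hjk : j < k + 1 := Finset.mem_range.1 hj
      have hdf : HasDerivAt (iteratedDeriv j f) (iteratedDeriv (j + 1) f x) x :=
        hasDerivAt_iter hU hf (by omega) hx
      have hz : HasDerivAt (fun y : ℝ => (y - c) ^ ((j : ℤ) - n - k))
          ((((j : ℤ) - n - k) : ℝ) * (x - c) ^ ((j : ℤ) - n - k - 1)) x := by
        have h0 := (hasDerivAt_zpow ((j : ℤ) - n - k) (x - c) (Or.inl (sub_ne_zero.2 hxc)))
        have h1 := h0.comp x ((hasDerivAt_id x).sub_const c)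
        simpa [Function.comp_def] using h1
      have h3 := ((hdf.const_mul ((k.choose j : ℝ))).mul_const
        ((-1 : ℝ) ^ (k - j) * (Nat.factorial (n + k - j - 1)) / (Nat.factorial (n - 1)))).mul hz
      refine h3.congr_deriv ?_
      push_cast
      ring
    rw [hDS.deriv]
    -- now the combinatorial identity
    set A : ℕ → ℝ := fun j => ((k.choose j : ℝ) * ((-1 : ℝ) ^ (k - j) * (Nat.factorial (n + k - j - 1)) / (Nat.factorial (n - 1)))) * (iteratedDeriv (j+1) f x * (x - c) ^ ((j : ℤ) - n - k)) with hA
    set B : ℕ → ℝ := fun j => ((k.choose j : ℝ) * ((-1 : ℝ) ^ (k - j) * (Nat.factorial (n + k - j - 1)) / (Nat.factorial (n - 1)))) * (iteratedDeriv j f x * ((((j : ℤ) - n - k : ℤ) : ℝ) * (x - c) ^ ((j : ℤ) - n - k - 1))) with hB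
    set W : ℕ → ℝ := fun j => (k.choose (j+1) : ℝ) * iteratedDeriv (j+1) f x * ((-1 : ℝ) ^ (k - j) * (Nat.factorial (n + k - j - 1)) / (Nat.factorial (n - 1))) * (x - c) ^ ((j : ℤ) - n - k) with hW
    have hsplit : ∀ j ∈ Finset.range (k+1),
        ((k.choose j : ℝ) * ((-1 : ℝ) ^ (k - j) * (Nat.factorial (n + k - j - 1)) / (Nat.factorial (n - 1)))) *
          (iteratedDeriv (j+1) f x * (x - c) ^ ((j : ℤ) - n - k)
            + iteratedDeriv j f x * (((j : ℤ) - n - k) * (x - c) ^ ((j : ℤ) - n - k - 1)))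
          = A j + B j := by
      intro j _
      rw [hA, hB]
      push_cast
      ring
    rw [Finset.sum_congr rfl hsplit, Finset.sum_add_distrib]
    rw [Finset.sum_range_succ' _ (k+1), Finset.sum_range_succ' B k]
    have hTAW : ∀ j ∈ Finset.range (k+1),
        ((k + 1).choose (j + 1) : ℝ) * iteratedDeriv (j + 1) f x *
            ((-1 : ℝ) ^ (k + 1 - (j + 1)) * ↑(Nat.factorial (n + (k + 1) - (j + 1) - 1)) / ↑(Nat.factorial (n - 1))) *
          (x - c) ^ ((↑(j + 1) : ℤ) - ↑n - ↑(k + 1)) = A j + W j := by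
      intro j hj
      rw [hA, hW]
      simp only
      rw [Nat.choose_succ_succ, Nat.succ_sub_succ,
        show n + (k+1) - (j+1) - 1 = n + k - j - 1 from by omega]
      simp only [Nat.succ_eq_add_one]
      push_cast
      ring_nf
    have hWk : W k = 0 := by
      rw [hW]; simp [Nat.choose_succ_self]
    have hBW : ∀ j ∈ Finset.range k, B (j+1) = W j := by
      intro j hj
      have hjk : j < k := Finset.mem_range.1 hj
      obtain ⟨p, rfl⟩ : ∃ p, n = p + 1 := ⟨n - 1, by omega⟩
      obtain ⟨d, rfl⟩ : ∃ d, k = j + 1 + d := ⟨k - (j+1), by omega⟩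
      rw [hB, hW]
      simp only
      rw [show j + 1 + d - (j + 1) = d from by omega,
        show p + 1 + (j + 1 + d) - (j + 1) - 1 = p + d from by omega,
        show j + 1 + d - j = d + 1 from by omega,
        show p + 1 + (j + 1 + d) - j - 1 = (p + d) + 1 from by omega,
        show p + 1 - 1 = p from by omega,
        Nat.factorial_succ]
      push_cast
      ring_nf
    have hB0T0 : B 0 = ((k + 1).choose 0 : ℝ) * iteratedDeriv 0 f x *
          ((-1 : ℝ) ^ (k + 1 - 0) * ↑(Nat.factorial (n + (k + 1) - 0 - 1)) / ↑(Nat.factorial (n - 1))) *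
        (x - c) ^ ((↑(0:ℕ) : ℤ) - ↑n - ↑(k + 1)) := by
      obtain ⟨p, rfl⟩ : ∃ p, n = p + 1 := ⟨n - 1, by omega⟩
      rw [hB]
      simp only [Nat.choose_zero_right, Nat.sub_zero]
      rw [show p + 1 + k - 1 = p + k from by omega,
        show p + 1 + (k + 1) - 1 = (p + k) + 1 from by omega,
        show p + 1 - 1 = p from by omega,
        Nat.factorial_succ]
      push_cast
      ring_nf
    rw [Finset.sum_congr rfl hTAW, Finset.sum_add_distrib,
      Finset.sum_range_succ W k, hWk, add_zero, Finset.sum_congr rfl hBW, hB0T0]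
    ring

/-- the integral of the two-point Hermite interpolating polynomial is
`Σ_j w_j^a f⁽ʲ⁾(a) + Σ_j w_j^b f⁽ʲ⁾(b)`, and consequently
`Σ_j w_j^a [f⁽ʲ⁾(a) + (-1)^j f⁽ʲ⁾(b)]`. -/
theorem stmt0 (n : ℕ) (hn : 1 ≤ n) (a b : ℝ) (hab : a < b) (f : ℝ → ℝ)
    (hf : ∃ U : Set ℝ, IsOpen U ∧ Set.Icc a b ⊆ U ∧ ContDiffOn ℝ ((n - 1 : ℕ) : ℕ∞) f U) :
    (∫ x in a..b, hermite n a b f x)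
        = (∑ j ∈ Finset.range n, wA n a b j * iteratedDeriv j f a)
          + (∑ j ∈ Finset.range n, wB n a b j * iteratedDeriv j f b)
    ∧ (∫ x in a..b, hermite n a b f x)
        = ∑ j ∈ Finset.range n,
            wA n a b j * (iteratedDeriv j f a + (-1 : ℝ) ^ j * iteratedDeriv j f b) := by
  obtain ⟨U, hUopen, hUsub, hfC⟩ := hf
  have haU : a ∈ U := hUsub ⟨le_refl a, hab.le⟩
  have hbU : b ∈ U := hUsub ⟨hab.le, le_refl b⟩
  have hba : b - a ≠ 0 := sub_ne_zero.2 hab.ne'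
  have hABne : a ≠ b := hab.ne
  set Bc : ℕ → ℝ := fun k => iteratedDeriv k (fun t => f t / (t - a) ^ n) b with hBc
  set Ac : ℕ → ℝ := fun k => iteratedDeriv k (fun t => f t / (t - b) ^ n) a with hAc
  have hAform : ∀ k, k ≤ n - 1 → Ac k =
      ∑ j ∈ Finset.range (k + 1), (k.choose j : ℝ) * iteratedDeriv j f a *
        ((-1 : ℝ) ^ (k - j) * (Nat.factorial (n + k - j - 1)) / (Nat.factorial (n - 1))) *
        (a - b) ^ ((j : ℤ) - n - k) := fun k hk =>
    leibniz_formula n (n-1) hn hUopen hfC b k hk a haU hABne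
  have hBform : ∀ k, k ≤ n - 1 → Bc k =
      ∑ j ∈ Finset.range (k + 1), (k.choose j : ℝ) * iteratedDeriv j f b *
        ((-1 : ℝ) ^ (k - j) * (Nat.factorial (n + k - j - 1)) / (Nat.factorial (n - 1))) *
        (b - a) ^ ((j : ℤ) - n - k) := fun k hk =>
    leibniz_formula n (n-1) hn hUopen hfC a k hk b hbU hABne.symm
  -- integral computation
  have hIb : ∀ k : ℕ, (∫ x in a..b, (x - b) ^ n * (x - a) ^ k)
      = (-1 : ℝ) ^ n * (Nat.factorial n) * (Nat.factorial k) / (Nat.factorial (n + k + 1))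
        * (b - a) ^ (n + k + 1) := by
    intro k
    have h1 : (∫ x in a..b, (x - b) ^ n * (x - a) ^ k)
        = ∫ x in a..b, (x - a) ^ k * (x - b) ^ n := by
      apply intervalIntegral.integral_congr; intro x _; ring
    have h2 := key_int n k a b
    rw [h1, h2, show k + n + 1 = n + k + 1 from by omega]
    ring
  have expand : Set.EqOn (hermite n a b f)
      (fun x => (∑ k ∈ Finset.range n, (Bc k / Nat.factorial k) * ((x - a) ^ n * (x - b) ^ k))
        + ∑ k ∈ Finset.range n, (Ac k / Nat.factorial k) * ((x - b) ^ n * (x - a) ^ k))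
      (Set.uIcc a b) := by
    intro x _
    show hermite n a b f x = _
    unfold hermite
    rw [Finset.mul_sum, Finset.mul_sum]
    congr 1 <;> (apply Finset.sum_congr rfl; intro k _; ring)
  have hcont1 : ∀ k : ℕ, Continuous (fun x : ℝ => (Bc k / Nat.factorial k) * ((x - a) ^ n * (x - b) ^ k)) := by
    intro k; fun_prop
  have hcont2 : ∀ k : ℕ, Continuous (fun x : ℝ => (Ac k / Nat.factorial k) * ((x - b) ^ n * (x - a) ^ k)) := by
    intro k; fun_prop
  have hint : (∫ x in a..b, hermite n a b f x)
      = (∑ k ∈ Finset.range n, (Bc k / Nat.factorial k) *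
          ((-1 : ℝ) ^ k * (Nat.factorial n) * (Nat.factorial k) / (Nat.factorial (n + k + 1))
            * (b - a) ^ (n + k + 1)))
        + ∑ k ∈ Finset.range n, (Ac k / Nat.factorial k) *
          ((-1 : ℝ) ^ n * (Nat.factorial n) * (Nat.factorial k) / (Nat.factorial (n + k + 1))
            * (b - a) ^ (n + k + 1)) := by
    rw [intervalIntegral.integral_congr expand]
    rw [intervalIntegral.integral_add]
    · rw [intervalIntegral.integral_finset_sum, intervalIntegral.integral_finset_sum]
      · congr 1
        · apply Finset.sum_congr rfl; intro k _
          rw [intervalIntegral.integral_const_mul, key_int k n a b]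
        · apply Finset.sum_congr rfl; intro k _
          rw [intervalIntegral.integral_const_mul, hIb k]
      · intro k _; exact ((hcont2 k).intervalIntegrable a b)
      · intro k _; exact ((hcont1 k).intervalIntegrable a b)
    · apply Continuous.intervalIntegrable
      exact continuous_finset_sum _ fun k _ => hcont1 k
    · apply Continuous.intervalIntegrable
      exact continuous_finset_sum _ fun k _ => hcont2 k
  -- a-side
  have ha_side : (∑ k ∈ Finset.range n, (Ac k / Nat.factorial k) *
          ((-1 : ℝ) ^ n * (Nat.factorial n) * (Nat.factorial k) / (Nat.factorial (n + k + 1))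
            * (b - a) ^ (n + k + 1)))
      = ∑ j ∈ Finset.range n, wA n a b j * iteratedDeriv j f a := by
    have step1 : ∀ k ∈ Finset.range n, (Ac k / Nat.factorial k) *
          ((-1 : ℝ) ^ n * (Nat.factorial n) * (Nat.factorial k) / (Nat.factorial (n + k + 1))
            * (b - a) ^ (n + k + 1))
        = ∑ j ∈ Finset.range (k + 1), ((k.choose j : ℝ) * iteratedDeriv j f a *
            ((-1 : ℝ) ^ (k - j) * (Nat.factorial (n + k - j - 1)) / (Nat.factorial (n - 1))) *
            (a - b) ^ ((j : ℤ) - n - k)) / Nat.factorial k *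
          ((-1 : ℝ) ^ n * (Nat.factorial n) * (Nat.factorial k) / (Nat.factorial (n + k + 1))
            * (b - a) ^ (n + k + 1)) := by
      intro k hk
      have hkn : k ≤ n - 1 := by have := Finset.mem_range.1 hk; omega
      rw [hAform k hkn, Finset.sum_div, Finset.sum_mul]
    rw [Finset.sum_congr rfl step1]
    rw [Finset.sum_comm' (s := Finset.range n) (t := fun k => Finset.range (k + 1))
      (s' := fun j => Finset.Icc j (n - 1)) (t' := Finset.range n)
      (by intro k j; simp only [Finset.mem_range, Finset.mem_Icc]; omega)]
    apply Finset.sum_congr rfl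
    intro j hj
    have hjn : j < n := Finset.mem_range.1 hj
    rw [wA, Finset.mul_sum, Finset.sum_mul]
    apply Finset.sum_congr rfl
    intro k hk
    have hjk : j ≤ k ∧ k ≤ n - 1 := Finset.mem_Icc.1 hk
    obtain ⟨d, rfl⟩ : ∃ d, k = j + d := ⟨k - j, by omega⟩
    obtain ⟨e, rfl⟩ : ∃ e, n = j + d + e + 1 := ⟨n - (j + d) - 1, by omega⟩
    have hz : ((j : ℤ) - (j + d + e + 1 : ℕ) - (j + d : ℕ))
        = -(((j + 2*d + e + 1 : ℕ)) : ℤ) := by push_cast; ring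
    rw [hz, zpow_neg, zpow_natCast]
    rw [show a - b = (-1 : ℝ) * (b - a) from by ring]
    rw [show j + d - j = d from by omega,
      show j + d + e + 1 + (j + d) - j - 1 = j + 2*d + e from by omega,
      show j + d + e + 1 - 1 = j + d + e from by omega,
      show j + d + e + 1 + (j + d) + 1 = 2*j + 2*d + e + 2 from by omega]
    have hf1 : (Nat.factorial (j + d + e) : ℝ) ≠ 0 := Nat.cast_ne_zero.2 (Nat.factorial_ne_zero _)
    have hf2 : (Nat.factorial (2*j + 2*d + e + 2) : ℝ) ≠ 0 := Nat.cast_ne_zero.2 (Nat.factorial_ne_zero _)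
    have hf3 : (Nat.factorial (j + d) : ℝ) ≠ 0 := Nat.cast_ne_zero.2 (Nat.factorial_ne_zero _)
    have hFn : (Nat.factorial (j + d + e + 1) : ℝ)
        = ((j + d + e + 1 : ℕ) : ℝ) * Nat.factorial (j + d + e) := by
      rw [Nat.factorial_succ]; push_cast; ring
    have hsg1 : ((-1 : ℝ)) ^ d * (-1) ^ (j + 2*d + e + 1) * (-1) ^ (j + d + e + 1) = 1 := by
      rw [← pow_add, ← pow_add]
      exact Even.neg_one_pow ⟨j + 2*d + e + 1, by ring⟩
    have hkey : ((-1 : ℝ)) ^ d * (((-1) * (b - a)) ^ (j + 2*d + e + 1))⁻¹ *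
        ((-1) ^ (j + d + e + 1) * (b - a) ^ (2*j + 2*d + e + 2)) = (b - a) ^ (j + 1) := by
      rw [mul_pow, mul_inv, ← inv_pow, inv_neg_one,
        show 2*j + 2*d + e + 2 = (j + 2*d + e + 1) + (j + 1) from by omega, pow_add]
      trans (((-1 : ℝ)) ^ d * (-1) ^ (j + 2*d + e + 1) * (-1) ^ (j + d + e + 1)) *
        (((b - a) ^ (j + 2*d + e + 1))⁻¹ * ((b - a) ^ (j + 2*d + e + 1) * (b - a) ^ (j + 1)))
      · ring
      · rw [hsg1, inv_mul_cancel_left₀ (pow_ne_zero _ hba), one_mul]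
    trans ((((j + d).choose j : ℝ) * iteratedDeriv j f a *
        ((Nat.factorial (j + 2*d + e) : ℝ) / (Nat.factorial (j + d + e))) / (Nat.factorial (j + d)) *
        ((Nat.factorial (j + d + e + 1) : ℝ) * (Nat.factorial (j + d)) / (Nat.factorial (2*j + 2*d + e + 2)))) *
      (((-1 : ℝ)) ^ d * (((-1) * (b - a)) ^ (j + 2*d + e + 1))⁻¹ *
        ((-1) ^ (j + d + e + 1) * (b - a) ^ (2*j + 2*d + e + 2))))
    · ring
    · rw [hkey, hFn]
      push_cast
      field_simp
  -- b-side
  have hb_side : (∑ k ∈ Finset.range n, (Bc k / Nat.factorial k) *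
          ((-1 : ℝ) ^ k * (Nat.factorial n) * (Nat.factorial k) / (Nat.factorial (n + k + 1))
            * (b - a) ^ (n + k + 1)))
      = ∑ j ∈ Finset.range n, wB n a b j * iteratedDeriv j f b := by
    have step1 : ∀ k ∈ Finset.range n, (Bc k / Nat.factorial k) *
          ((-1 : ℝ) ^ k * (Nat.factorial n) * (Nat.factorial k) / (Nat.factorial (n + k + 1))
            * (b - a) ^ (n + k + 1))
        = ∑ j ∈ Finset.range (k + 1), ((k.choose j : ℝ) * iteratedDeriv j f b *
            ((-1 : ℝ) ^ (k - j) * (Nat.factorial (n + k - j - 1)) / (Nat.factorial (n - 1))) *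
            (b - a) ^ ((j : ℤ) - n - k)) / Nat.factorial k *
          ((-1 : ℝ) ^ k * (Nat.factorial n) * (Nat.factorial k) / (Nat.factorial (n + k + 1))
            * (b - a) ^ (n + k + 1)) := by
      intro k hk
      rw [hBform k (by have := Finset.mem_range.1 hk; omega), Finset.sum_div, Finset.sum_mul]
    rw [Finset.sum_congr rfl step1]
    rw [Finset.sum_comm' (s := Finset.range n) (t := fun k => Finset.range (k + 1))
      (s' := fun j => Finset.Icc j (n - 1)) (t' := Finset.range n)
      (by intro k j; simp only [Finset.mem_range, Finset.mem_Icc]; omega)]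
    apply Finset.sum_congr rfl
    intro j hj
    have hjn : j < n := Finset.mem_range.1 hj
    rw [wB, wA, Finset.mul_sum, Finset.mul_sum, Finset.sum_mul]
    apply Finset.sum_congr rfl
    intro k hk
    have hjk : j ≤ k ∧ k ≤ n - 1 := Finset.mem_Icc.1 hk
    obtain ⟨d, rfl⟩ : ∃ d, k = j + d := ⟨k - j, by omega⟩
    obtain ⟨e, rfl⟩ : ∃ e, n = j + d + e + 1 := ⟨n - (j + d) - 1, by omega⟩
    have hz : ((j : ℤ) - (j + d + e + 1 : ℕ) - (j + d : ℕ))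
        = -(((j + 2*d + e + 1 : ℕ)) : ℤ) := by push_cast; ring
    rw [hz, zpow_neg, zpow_natCast]
    rw [show j + d - j = d from by omega,
      show j + d + e + 1 + (j + d) - j - 1 = j + 2*d + e from by omega,
      show j + d + e + 1 - 1 = j + d + e from by omega,
      show j + d + e + 1 + (j + d) + 1 = 2*j + 2*d + e + 2 from by omega]
    have hf1 : (Nat.factorial (j + d + e) : ℝ) ≠ 0 := Nat.cast_ne_zero.2 (Nat.factorial_ne_zero _)
    have hf2 : (Nat.factorial (2*j + 2*d + e + 2) : ℝ) ≠ 0 := Nat.cast_ne_zero.2 (Nat.factorial_ne_zero _)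
    have hf3 : (Nat.factorial (j + d) : ℝ) ≠ 0 := Nat.cast_ne_zero.2 (Nat.factorial_ne_zero _)
    have hFn : (Nat.factorial (j + d + e + 1) : ℝ)
        = ((j + d + e + 1 : ℕ) : ℝ) * Nat.factorial (j + d + e) := by
      rw [Nat.factorial_succ]; push_cast; ring
    have hsg2 : ((-1 : ℝ)) ^ d * (-1) ^ (j + d) = (-1) ^ j := by
      rw [← pow_add, show d + (j + d) = 2*d + j from by omega, pow_add, pow_mul]
      norm_num
    have hkey : ((-1 : ℝ)) ^ d * (((b - a)) ^ (j + 2*d + e + 1))⁻¹ *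
        ((-1) ^ (j + d) * (b - a) ^ (2*j + 2*d + e + 2)) = (-1) ^ j * (b - a) ^ (j + 1) := by
      rw [show 2*j + 2*d + e + 2 = (j + 2*d + e + 1) + (j + 1) from by omega, pow_add]
      trans (((-1 : ℝ)) ^ d * (-1) ^ (j + d)) *
        (((b - a) ^ (j + 2*d + e + 1))⁻¹ * ((b - a) ^ (j + 2*d + e + 1) * (b - a) ^ (j + 1)))
      · ring
      · rw [hsg2, inv_mul_cancel_left₀ (pow_ne_zero _ hba)]
    trans ((((j + d).choose j : ℝ) * iteratedDeriv j f b *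
        ((Nat.factorial (j + 2*d + e) : ℝ) / (Nat.factorial (j + d + e))) / (Nat.factorial (j + d)) *
        ((Nat.factorial (j + d + e + 1) : ℝ) * (Nat.factorial (j + d)) / (Nat.factorial (2*j + 2*d + e + 2)))) *
      (((-1 : ℝ)) ^ d * (((b - a)) ^ (j + 2*d + e + 1))⁻¹ *
        ((-1) ^ (j + d) * (b - a) ^ (2*j + 2*d + e + 2))))
    · ring
    · rw [hkey, hFn]
      push_cast
      field_simp
  have main : (∫ x in a..b, hermite n a b f x)
      = (∑ j ∈ Finset.range n, wA n a b j * iteratedDeriv j f a)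
        + (∑ j ∈ Finset.range n, wB n a b j * iteratedDeriv j f b) := by
    rw [hint, ha_side, hb_side]; ring
  refine ⟨main, ?_⟩
  rw [main]
  rw [show (∑ j ∈ Finset.range n, wA n a b j *
      (iteratedDeriv j f a + (-1 : ℝ) ^ j * iteratedDeriv j f b))
    = ∑ j ∈ Finset.range n, (wA n a b j * iteratedDeriv j f a
        + wB n a b j * iteratedDeriv j f b) from
    Finset.sum_congr rfl fun j _ => by unfold wB; ring]
  rw [Finset.sum_add_distrib]
end

section
/- Let n ≥ 1 be an integer, let a < b be real numbers, and let θ = (c, δ_0, …, δ_{n-2}) be arbitrary real parameters. Then for every f : ℝ → ℝ that is n-times continuously differentiable on [a,b], the n-fold reverse integration by parts identity holds: ∫_a^b f(x) dx = Σ_{j=0}^{n-1} α_j^b f^{(j)}(b) + Σ_{j=0}^{n-1} α_j^a f^{(j)}(a) + ∫_a^b (-1)^n f^{(n)}(x) P(x,θ) dx. -/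
open Finset intervalIntegral

noncomputable def Qk (n : ℕ) (c : ℝ) (δ : ℕ → ℝ) (m : ℕ) (x : ℝ) : ℝ :=
  (x + c) ^ (n - m) / (Nat.factorial (n - m)) +
    ∑ i ∈ Finset.range (n - 1 - m), δ (i + m) * x ^ i / (Nat.factorial i)

lemma Qk_continuous (n : ℕ) (c : ℝ) (δ : ℕ → ℝ) (m : ℕ) : Continuous (Qk n c δ m) := by
  unfold Qk; fun_prop

lemma Qk_hasDerivAt (n : ℕ) (c : ℝ) (δ : ℕ → ℝ) {m : ℕ} (hm : m < n) (x : ℝ) :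
    HasDerivAt (Qk n c δ m) (Qk n c δ (m + 1) x) x := by
  have hs : n - m = (n - (m + 1)) + 1 := by omega
  have h1 : HasDerivAt (fun x : ℝ => (x + c) ^ (n - m) / (Nat.factorial (n - m)))
      ((x + c) ^ (n - (m + 1)) / (Nat.factorial (n - (m + 1)))) x := by
    have := (((hasDerivAt_id x).add_const c).pow (n - m)).div_const
      ((Nat.factorial (n - m) : ℝ))
    simp only [mul_one, id_eq] at this
    refine this.congr_deriv ?_
    rw [hs, Nat.factorial_succ]
    have h0 : (Nat.factorial (n - (m+1)) : ℝ) ≠ 0 := by positivity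
    push_cast
    field_simp
  have h2 : HasDerivAt (fun x : ℝ => ∑ i ∈ Finset.range (n - 1 - m), δ (i + m) * x ^ i / (Nat.factorial i))
      (∑ i ∈ Finset.range (n - 1 - (m + 1)), δ (i + (m + 1)) * x ^ i / (Nat.factorial i)) x := by
    have hterm : ∀ i ∈ Finset.range (n - 1 - m),
        HasDerivAt (fun x : ℝ => δ (i + m) * x ^ i / (Nat.factorial i))
          (δ (i + m) * ((i : ℝ) * x ^ (i - 1)) / (Nat.factorial i)) x := by
      intro i _
      exact ((hasDerivAt_pow i x).const_mul (δ (i + m))).div_const _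
    have hsum := HasDerivAt.fun_sum hterm
    refine hsum.congr_deriv ?_
    rcases Nat.eq_zero_or_pos (n - 1 - m) with h | h
    · simp [h, Nat.sub_eq_zero_of_le (by omega : n - 1 ≤ m + 1)]
    · have ht : n - 1 - m = (n - 1 - (m + 1)) + 1 := by omega
      rw [ht, Finset.sum_range_succ']
      simp only [Nat.cast_zero, zero_mul, mul_zero, zero_div, add_zero]
      apply Finset.sum_congr rfl
      intro i _
      have : (i + 1 : ℕ) - 1 = i := rfl
      rw [this, Nat.factorial_succ]
      have h0 : (Nat.factorial i : ℝ) ≠ 0 := by positivity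
      push_cast
      have : i + 1 + m = i + (m + 1) := by omega
      rw [this]
      field_simp
  exact h1.add h2

/-- the `n`-fold reverse-integration-by-parts identity. -/
theorem stmt2 (n : ℕ) (hn : 1 ≤ n) (a b : ℝ) (hab : a < b) (c : ℝ) (δ : ℕ → ℝ)
    (f : ℝ → ℝ) (hf : ContDiffOn ℝ (n : ℕ∞) f (Set.Icc a b)) :
    ∫ x in a..b, f x
      = (∑ j ∈ Finset.range n, alphaB n b c δ j * iteratedDerivWithin j f (Set.Icc a b) b)
        + (∑ j ∈ Finset.range n, alphaA n a c δ j * iteratedDerivWithin j f (Set.Icc a b) a)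
        + ∫ x in a..b, (-1 : ℝ) ^ n * iteratedDerivWithin n f (Set.Icc a b) x * Pker n c δ x := by
  set s : Set ℝ := Set.Icc a b with hsdef
  have hs : UniqueDiffOn ℝ s := uniqueDiffOn_Icc hab
  set F : ℕ → ℝ → ℝ := fun j => iteratedDerivWithin j f s with hFdef
  have hF : ∀ j, j ≤ n → ContinuousOn (F j) s := fun j hj =>
    hf.continuousOn_iteratedDerivWithin (by exact_mod_cast hj) hs
  have hFd : ∀ j, j < n → ∀ x ∈ s, HasDerivWithinAt (F j) (F (j + 1) x) s x := by
    intro j hj x hx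
    have hd := (hf.differentiableOn_iteratedDerivWithin (by exact_mod_cast hj) hs x hx)
    show HasDerivWithinAt (iteratedDerivWithin j f s) (iteratedDerivWithin (j + 1) f s x) s x
    rw [iteratedDerivWithin_succ]
    exact hd.hasDerivWithinAt
  have hFd' : ∀ j, j < n → ∀ x ∈ Set.Ioo a b, HasDerivAt (F j) (F (j + 1) x) x := by
    intro j hj x hx
    exact (hFd j hj x (Set.mem_Icc_of_Ioo hx)).hasDerivAt (Icc_mem_nhds hx.1 hx.2)
  have hInt : ∀ j, j ≤ n → ∀ m, IntervalIntegrable (fun x => F j x * Qk n c δ m x)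
      MeasureTheory.volume a b := by
    intro j hj m
    apply ContinuousOn.intervalIntegrable
    rw [Set.uIcc_of_le hab.le]
    exact (hF j hj).mul (Qk_continuous n c δ m).continuousOn
  -- single integration by parts step
  have step : ∀ k, k < n →
      (∫ x in a..b, F k x * Qk n c δ (n - k) x)
        = F k b * Qk n c δ (n - 1 - k) b - F k a * Qk n c δ (n - 1 - k) a
          - ∫ x in a..b, F (k + 1) x * Qk n c δ (n - 1 - k) x := by
    intro k hk
    have hm : n - 1 - k < n := by omega
    have hsucc : n - 1 - k + 1 = n - k := by omega
    set u : ℝ → ℝ := fun x => F k x * Qk n c δ (n - 1 - k) x with hu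
    set u' : ℝ → ℝ := fun x =>
      F (k + 1) x * Qk n c δ (n - 1 - k) x + F k x * Qk n c δ (n - k) x with hu'
    have hud : ∀ x ∈ Set.Ioo a b, HasDerivWithinAt u (u' x) (Set.Ioi x) x := by
      intro x hx
      have hq := Qk_hasDerivAt n c δ hm x
      rw [hsucc] at hq
      exact (((hFd' k hk x hx).mul hq)).hasDerivWithinAt
    have hcu : ContinuousOn u s :=
      (hF k hk.le).mul (Qk_continuous n c δ (n - 1 - k)).continuousOn
    have hint1 := hInt (k + 1) hk (n - 1 - k)
    have hint0 := hInt k hk.le (n - k)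
    have hintu : IntervalIntegrable u' MeasureTheory.volume a b := hint1.add hint0
    have hftc := intervalIntegral.integral_eq_sub_of_hasDeriv_right_of_le hab.le hcu hud hintu
    rw [hu'] at hftc
    rw [intervalIntegral.integral_add hint1 hint0] at hftc
    have : u b = F k b * Qk n c δ (n - 1 - k) b := rfl
    have : u a = F k a * Qk n c δ (n - 1 - k) a := rfl
    simp only [hu] at hftc
    linarith
  -- main induction
  have main : ∀ k, k ≤ n →
      (∫ x in a..b, f x)
        = (∑ j ∈ Finset.range k, (-1 : ℝ) ^ j *
            (F j b * Qk n c δ (n - 1 - j) b - F j a * Qk n c δ (n - 1 - j) a))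
          + (-1 : ℝ) ^ k * ∫ x in a..b, F k x * Qk n c δ (n - k) x := by
    intro k
    induction k with
    | zero =>
      intro _
      have hQ : ∀ x : ℝ, Qk n c δ n x = 1 := by
        intro x
        simp [Qk, Nat.sub_self, Nat.sub_eq_zero_of_le (Nat.sub_le n 1)]
      simp only [Finset.range_zero, Finset.sum_empty, pow_zero, one_mul, Nat.sub_self, zero_add]
      rw [show (n - 0) = n from rfl]
      apply intervalIntegral.integral_congr
      intro x hx
      rw [Set.uIcc_of_le hab.le] at hx
      simp [hFdef, hQ, iteratedDerivWithin_zero]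
    | succ k ih =>
      intro hk
      have hkn : k < n := hk
      rw [ih hkn.le, step k hkn, Finset.sum_range_succ,
        show n - (k + 1) = n - 1 - k from by omega]
      ring
  have hmain := main n le_rfl
  have hQ0 : ∀ x : ℝ, Qk n c δ 0 x = Pker n c δ x := by
    intro x; simp [Qk, Pker]
  have hlast : ((-1 : ℝ) ^ n * ∫ x in a..b, F n x * Qk n c δ (n - n) x)
      = ∫ x in a..b, (-1 : ℝ) ^ n * iteratedDerivWithin n f s x * Pker n c δ x := by
    rw [← intervalIntegral.integral_const_mul]
    apply intervalIntegral.integral_congr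
    intro x hx
    show (-1 : ℝ) ^ n * (F n x * Qk n c δ (n - n) x)
        = (-1 : ℝ) ^ n * iteratedDerivWithin n f s x * Pker n c δ x
    rw [Nat.sub_self, hQ0 x, mul_assoc]
  have hsum : (∑ j ∈ Finset.range n, (-1 : ℝ) ^ j *
        (F j b * Qk n c δ (n - 1 - j) b - F j a * Qk n c δ (n - 1 - j) a))
      = (∑ j ∈ Finset.range n, alphaB n b c δ j * F j b)
        + (∑ j ∈ Finset.range n, alphaA n a c δ j * F j a) := by
    rw [← Finset.sum_add_distrib]
    apply Finset.sum_congr rfl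
    intro j hj
    have hjn : j < n := Finset.mem_range.mp hj
    have e1 : n - (n - 1 - j) = j + 1 := by omega
    have e2 : n - 1 - (n - 1 - j) = j := by omega
    have e3 : ∀ i, i + (n - 1 - j) = i + n - 1 - j := by intro i; omega
    have hQb : Qk n c δ (n - 1 - j) b
        = (b + c) ^ (j + 1) / (Nat.factorial (j + 1)) +
          ∑ i ∈ Finset.range j, δ (i + n - 1 - j) * b ^ i / (Nat.factorial i) := by
      rw [Qk, e1, e2]
      congr 1
      exact Finset.sum_congr rfl fun i _ => by rw [e3]
    have hQa : Qk n c δ (n - 1 - j) a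
        = (a + c) ^ (j + 1) / (Nat.factorial (j + 1)) +
          ∑ i ∈ Finset.range j, δ (i + n - 1 - j) * a ^ i / (Nat.factorial i) := by
      rw [Qk, e1, e2]
      congr 1
      exact Finset.sum_congr rfl fun i _ => by rw [e3]
    rw [hQb, hQa, alphaA, alphaB, pow_succ]
    ring
  rw [hmain, hsum, hlast]
end

section
/- Let n ≥ 1 be an integer, let a < b be real numbers, and let θ = (c, δ_0, …, δ_{n-2}) be real parameters. Then α_j^a = w_j^a for all j = 0, …, n-1 if and only if α_j^b = w_j^b for all j = 0, …, n-1. -/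
open Finset intervalIntegral

lemma factR_ne (k : ℕ) : ((k.factorial : ℝ)) ≠ 0 :=
  Nat.cast_ne_zero.mpr k.factorial_ne_zero

lemma alt_binom : ∀ (p : ℕ) (k N : ℕ), p ≤ k → p ≤ N →
    ∑ r ∈ range (p + 1), (-1 : ℝ) ^ r * (p.choose r) * ((N - r).choose k) =
      ((N - p).choose (k - p)) := by
  intro p
  induction p with
  | zero => intro k N _ _; simp
  | succ p ih =>
    intro k N hk hN
    have hpk : p ≤ k := le_trans (Nat.le_succ p) hk
    have hpN1 : p ≤ N - 1 := by omega
    have ih1 := ih k N hpk (by omega)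
    have ih2 := ih k (N - 1) hpk hpN1
    have e1 : ∑ r ∈ range (p + 2), (-1 : ℝ) ^ r * ((p+1).choose r) * ((N - r).choose k)
        = (∑ r ∈ range (p + 1), (-1 : ℝ) ^ (r+1) * ((p+1).choose (r+1)) * ((N - (r+1)).choose k))
          + ((N).choose k) := by
      rw [Finset.sum_range_succ' (fun r => (-1 : ℝ) ^ r * ((p+1).choose r) * ((N - r).choose k)) (p+1)]
      simp
    have e2 : ∀ r ∈ range (p + 1),
        (-1 : ℝ) ^ (r+1) * ((p+1).choose (r+1)) * ((N - (r+1)).choose k)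
        = -((-1 : ℝ) ^ r * (p.choose r) * ((N - 1 - r).choose k))
          - (-1 : ℝ) ^ r * (p.choose (r+1)) * ((N - (r+1)).choose k) := by
      intro r hr
      rw [Nat.choose_succ_succ]
      have : N - (r+1) = N - 1 - r := by omega
      rw [this]
      push_cast
      ring
    have e3 : ∑ r ∈ range (p + 1), ((-1 : ℝ) ^ r * (p.choose (r+1)) * ((N - (r+1)).choose k))
        = ((N).choose k)
          - ∑ r ∈ range (p + 1), (-1 : ℝ) ^ r * (p.choose r) * ((N - r).choose k) := by
      have h4 : ∑ r ∈ range (p + 2), (-1 : ℝ) ^ r * (p.choose r) * ((N - r).choose k)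
          = (∑ r ∈ range (p + 1), (-1 : ℝ) ^ (r+1) * (p.choose (r+1)) * ((N - (r+1)).choose k))
            + ((N).choose k) := by
        rw [Finset.sum_range_succ' (fun r => (-1 : ℝ) ^ r * (p.choose r) * ((N - r).choose k)) (p+1)]
        simp
      have h5 : ∑ r ∈ range (p + 2), (-1 : ℝ) ^ r * (p.choose r) * ((N - r).choose k)
          = ∑ r ∈ range (p + 1), (-1 : ℝ) ^ r * (p.choose r) * ((N - r).choose k) := by
        rw [Finset.sum_range_succ]
        simp [Nat.choose_succ_self]
      have h6 : ∑ r ∈ range (p + 1), (-1 : ℝ) ^ (r+1) * (p.choose (r+1)) * ((N - (r+1)).choose k)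
          = -∑ r ∈ range (p + 1), ((-1 : ℝ) ^ r * (p.choose (r+1)) * ((N - (r+1)).choose k)) := by
        rw [← Finset.sum_neg_distrib]
        refine Finset.sum_congr rfl fun r _ => by ring
      rw [h5, h6] at h4
      linarith
    rw [e1, Finset.sum_congr rfl e2]
    rw [Finset.sum_sub_distrib, Finset.sum_neg_distrib, e3, ih1, ih2]
    have hP : (N - p).choose (k - p) = (N - 1 - p).choose (k - p) + (N - 1 - p).choose (k - p - 1) := by
      have h7 : N - p = (N - 1 - p) + 1 := by omega
      have h8 : k - p = (k - p - 1) + 1 := by omega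
      rw [h7, h8, Nat.choose_succ_succ]
      simp only [Nat.succ_eq_add_one]
      have h9 : k - p - 1 + 1 = k - p := by omega
      rw [h9]
      omega
    have hQ : N - (p+1) = N - 1 - p := by omega
    have hR : k - (p+1) = k - p - 1 := by omega
    rw [hQ, hR]
    rw [hP]
    push_cast
    ring

noncomputable def Tsum (j p : ℕ) : ℝ :=
  ∑ s ∈ range (p + 1),
    ((j + s).choose j : ℝ) * ((j + p + s).factorial) / ((2*j + p + s + 2).factorial)

lemma Hstep (j p s : ℕ) :
    ((j + 2 + s).choose (j+1) : ℝ) * (j + p + s + 2).factorial / (2*j + p + s + 4).factorial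
      - ((j + 1 + s).choose (j+1) : ℝ) * (j + p + s + 1).factorial / (2*j + p + s + 3).factorial
    = -((j : ℝ) + 2) * ((j + 1 + s).choose (j+1) : ℝ) * (j + p + s + 1).factorial
          / (2*j + p + s + 4).factorial
      + ((j + 1 + s).choose j : ℝ) * (j + p + s + 2).factorial / (2*j + p + s + 4).factorial := by
  have h1 : j + 2 + s = (j + 1 + s) + 1 := by omega
  rw [h1, Nat.choose_succ_succ]
  have h2 : (j + p + s + 2).factorial = (j + p + s + 2) * (j + p + s + 1).factorial :=
    Nat.factorial_succ _
  have h3 : (2*j + p + s + 4).factorial = (2*j + p + s + 4) * (2*j + p + s + 3).factorial :=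
    Nat.factorial_succ _
  rw [h2, h3]
  have hf1 : ((j + p + s + 1).factorial : ℝ) ≠ 0 := Nat.cast_ne_zero.mpr (Nat.factorial_ne_zero _)
  have hf2 : ((2*j + p + s + 3).factorial : ℝ) ≠ 0 := Nat.cast_ne_zero.mpr (Nat.factorial_ne_zero _)
  have hf3 : ((2:ℝ)*j + p + s + 4) ≠ 0 := by positivity
  push_cast
  field_simp
  ring

lemma Tsum_rec (j p : ℕ) :
    ((j:ℝ) + 2) * Tsum (j+1) p
      = Tsum j (p+1)
        - ((j + p + 2).choose (j+1) : ℝ) * (j + 2*p + 2).factorial / (2*j + 2*p + 4).factorial := by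
  have tele := Finset.sum_range_sub
    (f := fun s => ((j + 1 + s).choose (j+1) : ℝ) * (j + p + s + 1).factorial
      / (2*j + p + s + 3).factorial) (p+1)
  -- rewrite summand of tele via Hstep
  have e1 : ∑ s ∈ range (p+1),
      (((j + 1 + (s+1)).choose (j+1) : ℝ) * (j + p + (s+1) + 1).factorial
          / (2*j + p + (s+1) + 3).factorial
        - ((j + 1 + s).choose (j+1) : ℝ) * (j + p + s + 1).factorial
          / (2*j + p + s + 3).factorial)
      = ∑ s ∈ range (p+1),
        (-((j : ℝ) + 2) * ((j + 1 + s).choose (j+1) : ℝ) * (j + p + s + 1).factorial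
            / (2*j + p + s + 4).factorial
          + ((j + 1 + s).choose j : ℝ) * (j + p + s + 2).factorial
            / (2*j + p + s + 4).factorial) := by
    refine Finset.sum_congr rfl fun s _ => ?_
    have h1 : j + 1 + (s+1) = j + 2 + s := by omega
    have h2 : j + p + (s+1) + 1 = j + p + s + 2 := by omega
    have h3 : 2*j + p + (s+1) + 3 = 2*j + p + s + 4 := by omega
    rw [h1, h2, h3, Hstep j p s]
  rw [e1] at tele
  rw [Finset.sum_add_distrib] at tele
  -- first piece is -(j+2) * Tsum (j+1) p
  have e2 : ∑ s ∈ range (p+1),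
      (-((j : ℝ) + 2) * ((j + 1 + s).choose (j+1) : ℝ) * (j + p + s + 1).factorial
        / (2*j + p + s + 4).factorial)
      = -((j:ℝ) + 2) * Tsum (j+1) p := by
    rw [Tsum, Finset.mul_sum]
    refine Finset.sum_congr rfl fun s _ => ?_
    have h1 : j + 1 + p + s = j + p + s + 1 := by omega
    have h2 : 2*(j+1) + p + s + 2 = 2*j + p + s + 4 := by omega
    rw [h1, h2]
    ring
  -- second piece is Tsum j (p+1) minus its first term
  have e3 : ∑ s ∈ range (p+1),
      (((j + 1 + s).choose j : ℝ) * (j + p + s + 2).factorial / (2*j + p + s + 4).factorial)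
      = Tsum j (p+1) - ((j + p + 1).factorial : ℝ) / (2*j + p + 3).factorial := by
    rw [Tsum, Finset.sum_range_succ'
      (fun s => ((j + s).choose j : ℝ) * ((j + (p+1) + s).factorial) / ((2*j + (p+1) + s + 2).factorial)) (p+1)]
    have e4 : ∑ s ∈ range (p+1),
        (((j + (s+1)).choose j : ℝ) * ((j + (p+1) + (s+1)).factorial) / ((2*j + (p+1) + (s+1) + 2).factorial))
        = ∑ s ∈ range (p+1),
        (((j + 1 + s).choose j : ℝ) * (j + p + s + 2).factorial / (2*j + p + s + 4).factorial) := by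
      refine Finset.sum_congr rfl fun s _ => ?_
      have h1 : j + (s+1) = j + 1 + s := by omega
      have h2 : j + (p+1) + (s+1) = j + p + s + 2 := by omega
      have h3 : 2*j + (p+1) + (s+1) + 2 = 2*j + p + s + 4 := by omega
      rw [h1, h2, h3]
    rw [e4]
    have h4 : j + (p+1) + 0 = j + p + 1 := by omega
    have h5 : 2*j + (p+1) + 0 + 2 = 2*j + p + 3 := by omega
    have h6 : j + 0 = j := by omega
    rw [h4, h5, h6, Nat.choose_self]
    push_cast
    ring
  rw [e2, e3] at tele
  -- evaluate boundary terms
  have h6 : j + 1 + (p+1) = j + p + 2 := by omega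
  have h7 : j + p + (p+1) + 1 = j + 2*p + 2 := by omega
  have h8 : 2*j + p + (p+1) + 3 = 2*j + 2*p + 4 := by omega
  have h9 : j + 1 + 0 = j + 1 := by omega
  have h10 : j + p + 0 + 1 = j + p + 1 := by omega
  have h11 : 2*j + p + 0 + 3 = 2*j + p + 3 := by omega
  rw [h6, h7, h8, h9, h10, h11, Nat.choose_self] at tele
  push_cast at tele ⊢
  linear_combination (-1 : ℝ) * tele

lemma Tsum_eq : ∀ (j p : ℕ),
    Tsum j p = ((j + p).factorial : ℝ) * (j + 2*p + 1).factorial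
      / ((2*j + 2*p + 2).factorial * (j+1).factorial * p.factorial) := by
  intro j
  induction j with
  | zero =>
    intro p
    rw [Tsum]
    have e1 : ∑ s ∈ range (p + 1),
        ((0 + s).choose 0 : ℝ) * ((0 + p + s).factorial) / ((2*0 + p + s + 2).factorial)
        = ∑ s ∈ range (p + 1), (-(1 : ℝ)/(p + (s+1) + 1) - (-(1:ℝ)/(p + s + 1))) := by
      refine Finset.sum_congr rfl fun s _ => ?_
      simp only [Nat.choose_zero_right, Nat.cast_one, one_mul, Nat.zero_add, Nat.mul_zero]
      have h3 : (p + s + 2).factorial = (p + s + 2) * ((p + s + 1) * (p + s).factorial) := by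
        rw [Nat.factorial_succ, Nat.factorial_succ]
      rw [h3]
      have hf : ((p+s).factorial : ℝ) ≠ 0 := Nat.cast_ne_zero.mpr (Nat.factorial_ne_zero _)
      have hp1 : ((p:ℝ) + s + 1) ≠ 0 := by positivity
      have hp2 : ((p:ℝ) + s + 2) ≠ 0 := by positivity
      push_cast
      field_simp
      ring
    have tele := Finset.sum_range_sub (f := fun s => -(1 : ℝ)/(p + s + 1)) (p+1)
    push_cast at tele
    rw [e1, tele]
    have h4 : (0 + p) = p := by omega
    have h5 : 0 + 2*p + 1 = 2*p + 1 := by omega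
    have h6 : 2*0 + 2*p + 2 = 2*p + 2 := by omega
    rw [h4, h5, h6]
    have f1 : 2*p + 2 = (2*p + 1) + 1 := by omega
    have f2 : (2*p+1).factorial = (2*p+1) * (2*p).factorial := by
      have : 2*p + 1 = (2*p) + 1 := by omega
      rw [this, Nat.factorial_succ]
    have f3 : (2*p+2).factorial = (2*p+2) * ((2*p+1) * (2*p).factorial) := by
      rw [f1, Nat.factorial_succ, ← f1, f2]
    rw [f2, f3]
    have hf : ((p).factorial : ℝ) ≠ 0 := Nat.cast_ne_zero.mpr (Nat.factorial_ne_zero _)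
    have hf2 : (((2*p)).factorial : ℝ) ≠ 0 := Nat.cast_ne_zero.mpr (Nat.factorial_ne_zero _)
    have hp1 : ((p:ℝ) + 1) ≠ 0 := by positivity
    have hp2 : ((p:ℝ) + (p + 1) + 1) ≠ 0 := by positivity
    push_cast
    field_simp
    ring
  | succ j ih =>
    intro p
    have hrec := Tsum_rec j p
    rw [ih (p+1)] at hrec
    have hj2 : ((j:ℝ) + 2) ≠ 0 := by positivity
    have hsub : j + p + 2 - (j + 1) = p + 1 := by omega
    have hc : ((j + p + 2).choose (j+1) : ℝ) = ((j+p+2).factorial : ℝ)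
        / ((j+1).factorial * (p+1).factorial) := by
      rw [Nat.cast_choose ℝ (by omega : j + 1 ≤ j + p + 2), hsub]
    rw [hc] at hrec
    have goal2 : ((j:ℝ) + 2) * Tsum (j+1) p
        = ((j:ℝ) + 2) * (((j + 1 + p).factorial : ℝ) * ((j + 1) + 2*p + 1).factorial
          / ((2*(j+1) + 2*p + 2).factorial * ((j+1)+1).factorial * p.factorial)) := by
      rw [hrec]
      -- normalize indices in hypothesis side
      have h1 : j + (p+1) = j + p + 1 := by omega
      have h2 : j + 2*(p+1) + 1 = j + 2*p + 3 := by omega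
      have h3 : 2*j + 2*(p+1) + 2 = 2*j + 2*p + 4 := by omega
      have h4 : j + 1 + p = j + p + 1 := by omega
      have h5 : (j+1) + 2*p + 1 = j + 2*p + 2 := by omega
      have h6 : 2*(j+1) + 2*p + 2 = 2*j + 2*p + 4 := by omega
      rw [h1, h2, h3, h4, h5, h6]
      -- factorial reductions
      have f1 : (j + 2*p + 3).factorial = (j + 2*p + 3) * (j + 2*p + 2).factorial := by
        have : j + 2*p + 3 = (j + 2*p + 2) + 1 := by omega
        rw [this, Nat.factorial_succ, ← this]
      have f2 : (j + p + 2).factorial = (j + p + 2) * (j + p + 1).factorial := by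
        have : j + p + 2 = (j + p + 1) + 1 := by omega
        rw [this, Nat.factorial_succ, ← this]
      have f3 : ((j+1)+1).factorial = ((j+1)+1) * (j + 1).factorial := Nat.factorial_succ _
      have f4 : (p+1).factorial = (p+1) * p.factorial := Nat.factorial_succ _
      rw [f1, f2, f3, f4]
      have hf1 : ((j+p+1).factorial : ℝ) ≠ 0 := Nat.cast_ne_zero.mpr (Nat.factorial_ne_zero _)
      have hf2 : ((j+2*p+2).factorial : ℝ) ≠ 0 := Nat.cast_ne_zero.mpr (Nat.factorial_ne_zero _)
      have hf3 : ((2*j+2*p+4).factorial : ℝ) ≠ 0 := Nat.cast_ne_zero.mpr (Nat.factorial_ne_zero _)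
      have hf4 : ((j+1).factorial : ℝ) ≠ 0 := Nat.cast_ne_zero.mpr (Nat.factorial_ne_zero _)
      have hf5 : ((p).factorial : ℝ) ≠ 0 := Nat.cast_ne_zero.mpr (Nat.factorial_ne_zero _)
      have hp1 : ((p:ℝ) + 1) ≠ 0 := by positivity
      push_cast
      field_simp
      ring
    exact mul_left_cancel₀ hj2 goal2

lemma Wt_eq (n m : ℕ) (hm : m < n) :
    (n : ℝ) * Tsum m (n - 1 - m)
      = ((n.factorial : ℝ))^2 * ((2*n - m - 1).choose n)
        / ((2*n).factorial * (m+1).factorial) := by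
  rw [Tsum_eq]
  have h1 : m + (n - 1 - m) = n - 1 := by omega
  have h2 : m + 2*(n - 1 - m) + 1 = 2*n - m - 1 := by omega
  have h3 : 2*m + 2*(n - 1 - m) + 2 = 2*n := by omega
  rw [h1, h2, h3]
  have hc : ((2*n - m - 1).choose n : ℝ)
      = ((2*n - m - 1).factorial : ℝ) / ((n.factorial : ℝ) * ((n - 1 - m).factorial)) := by
    rw [Nat.cast_choose ℝ (by omega : n ≤ 2*n - m - 1)]
    have : 2*n - m - 1 - n = n - 1 - m := by omega
    rw [this]
  rw [hc]
  have hfac : (n : ℝ) * ((n-1).factorial : ℝ) = (n.factorial : ℝ) := by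
    rw [← Nat.cast_mul, Nat.mul_factorial_pred (by omega : n ≠ 0)]
  have hf1 : ((n-1).factorial : ℝ) ≠ 0 := Nat.cast_ne_zero.mpr (Nat.factorial_ne_zero _)
  have hf2 : ((2*n - m - 1).factorial : ℝ) ≠ 0 := Nat.cast_ne_zero.mpr (Nat.factorial_ne_zero _)
  have hf3 : ((2*n).factorial : ℝ) ≠ 0 := Nat.cast_ne_zero.mpr (Nat.factorial_ne_zero _)
  have hf4 : ((m+1).factorial : ℝ) ≠ 0 := Nat.cast_ne_zero.mpr (Nat.factorial_ne_zero _)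
  have hf5 : ((n - 1 - m).factorial : ℝ) ≠ 0 := Nat.cast_ne_zero.mpr (Nat.factorial_ne_zero _)
  have hf6 : (n.factorial : ℝ) ≠ 0 := Nat.cast_ne_zero.mpr (Nat.factorial_ne_zero _)
  field_simp
  linear_combination hfac

lemma quad_id (n j : ℕ) (hn : 1 ≤ n) (hj : j < n) :
    ((n:ℝ) * Tsum j (n - 1 - j))
      + ∑ m ∈ range (j+1), (-1:ℝ)^m * ((n:ℝ) * Tsum m (n - 1 - m)) / (j - m).factorial
    = 1 / (j+1).factorial := by
  have key := alt_binom (j+1) n (2*n) (by omega) (by omega)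
  have e0 : ∑ r ∈ range (j + 2), (-1 : ℝ) ^ r * ((j+1).choose r) * ((2*n - r).choose n)
      = (∑ m ∈ range (j + 1),
          (-1 : ℝ) ^ (m+1) * ((j+1).choose (m+1)) * ((2*n - (m+1)).choose n))
        + ((2*n).choose n) := by
    rw [Finset.sum_range_succ'
      (fun r => (-1 : ℝ) ^ r * ((j+1).choose r) * ((2*n - r).choose n)) (j+1)]
    simp
  rw [e0] at key
  -- termwise rewriting of the main sum
  have e1 : ∑ m ∈ range (j+1), (-1:ℝ)^m * ((n:ℝ) * Tsum m (n - 1 - m)) / (j - m).factorial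
      = ((n.factorial : ℝ))^2 / ((2*n).factorial * (j+1).factorial)
        * ∑ m ∈ range (j+1),
            (-1:ℝ)^m * ((j+1).choose (m+1)) * ((2*n - m - 1).choose n) := by
    rw [Finset.mul_sum]
    refine Finset.sum_congr rfl fun m hm => ?_
    have hmj : m ≤ j := by simpa [Nat.lt_succ_iff] using hm
    rw [Wt_eq n m (by omega)]
    have hcc : ((j+1).choose (m+1) : ℝ)
        = ((j+1).factorial : ℝ) / ((m+1).factorial * ((j-m).factorial)) := by
      rw [Nat.cast_choose ℝ (by omega : m + 1 ≤ j + 1)]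
      have : j + 1 - (m+1) = j - m := by omega
      rw [this]
    rw [hcc]
    have hf1 : ((j+1).factorial : ℝ) ≠ 0 := Nat.cast_ne_zero.mpr (Nat.factorial_ne_zero _)
    have hf2 : ((m+1).factorial : ℝ) ≠ 0 := Nat.cast_ne_zero.mpr (Nat.factorial_ne_zero _)
    have hf3 : ((j-m).factorial : ℝ) ≠ 0 := Nat.cast_ne_zero.mpr (Nat.factorial_ne_zero _)
    have hf4 : ((2*n).factorial : ℝ) ≠ 0 := Nat.cast_ne_zero.mpr (Nat.factorial_ne_zero _)
    field_simp
  rw [e1, Wt_eq n j hj]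
  -- transform key into the needed sum value
  have e2 : ∑ m ∈ range (j + 1),
        (-1 : ℝ) ^ (m+1) * ((j+1).choose (m+1)) * ((2*n - (m+1)).choose n)
      = - ∑ m ∈ range (j+1),
          (-1:ℝ)^m * ((j+1).choose (m+1)) * ((2*n - m - 1).choose n) := by
    rw [← Finset.sum_neg_distrib]
    refine Finset.sum_congr rfl fun m _ => ?_
    have : 2*n - (m+1) = 2*n - m - 1 := by omega
    rw [this]
    ring
  rw [e2] at key
  have e3 : ∑ m ∈ range (j+1), (-1:ℝ)^m * ((j+1).choose (m+1)) * ((2*n - m - 1).choose n)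
      = ((2*n).choose n : ℝ) - ((2*n - j - 1).choose n : ℝ) := by
    have hsymm : (2*n - (j+1)).choose (n - (j+1)) = (2*n - j - 1).choose n := by
      have h4 : n - (j+1) = (2*n - j - 1) - n := by omega
      have h5 : 2*n - (j+1) = 2*n - j - 1 := by omega
      rw [h4, h5, Nat.choose_symm (by omega : n ≤ 2*n - j - 1)]
    rw [hsymm] at key
    linarith
  rw [e3]
  -- final: (n!)^2 * C(2n,n) = (2n)!
  have hmain : ((2*n).choose n : ℝ) * (n.factorial : ℝ) * (n.factorial : ℝ)
      = ((2*n).factorial : ℝ) := by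
    have := Nat.choose_mul_factorial_mul_factorial (by omega : n ≤ 2*n)
    have h6 : 2*n - n = n := by omega
    rw [h6] at this
    exact_mod_cast congrArg (Nat.cast : ℕ → ℝ) this
  have hf1 : ((j+1).factorial : ℝ) ≠ 0 := Nat.cast_ne_zero.mpr (Nat.factorial_ne_zero _)
  have hf4 : ((2*n).factorial : ℝ) ≠ 0 := Nat.cast_ne_zero.mpr (Nat.factorial_ne_zero _)
  have hf6 : (n.factorial : ℝ) ≠ 0 := Nat.cast_ne_zero.mpr (Nat.factorial_ne_zero _)
  have h7 : ((2*n).choose n : ℝ) * ((n.factorial : ℝ))^2 = ((2*n).factorial : ℝ) := by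
    linear_combination hmain
  calc ((n.factorial : ℝ))^2 * ((2*n - j - 1).choose n) / ((2*n).factorial * (j+1).factorial)
        + ((n.factorial : ℝ))^2 / ((2*n).factorial * (j+1).factorial)
          * (((2*n).choose n : ℝ) - ((2*n - j - 1).choose n : ℝ))
      = ((2*n).choose n : ℝ) * ((n.factorial : ℝ))^2 / ((2*n).factorial * (j+1).factorial) := by
        ring
    _ = ((2*n).factorial : ℝ) / ((2*n).factorial * (j+1).factorial) := by rw [h7]
    _ = 1 / (j+1).factorial := by
        rw [div_eq_div_iff (mul_ne_zero hf4 hf1) hf1]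
        ring

lemma wA_tsum (n : ℕ) (a b : ℝ) (j : ℕ) (hn : 1 ≤ n) (hj : j < n) :
    wA n a b j = (b - a) ^ (j + 1) * ((n : ℝ) * Tsum j (n - 1 - j)) := by
  rw [wA, Tsum, mul_assoc]
  congr 1
  congr 1
  have hIcc : Finset.Icc j (n-1) = Finset.Ico j n := by
    rw [← Finset.Ico_add_one_right_eq_Icc]
    congr 1
    omega
  rw [hIcc, Finset.sum_Ico_eq_sum_range]
  have hr : n - j = (n - 1 - j) + 1 := by omega
  rw [hr]
  refine Finset.sum_congr rfl fun s _ => ?_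
  have h1 : n + (j + s) - j - 1 = j + (n - 1 - j) + s := by omega
  have h2 : n + (j + s) + 1 = 2*j + (n - 1 - j) + s + 2 := by omega
  rw [h1, h2]

noncomputable def gk (c : ℝ) (e : ℕ → ℝ) (j : ℕ) (x : ℝ) : ℝ :=
  (x + c) ^ (j+1) / (j+1).factorial + ∑ i ∈ range j, e (j - i) * x ^ i / i.factorial

lemma taylor_g (c : ℝ) (e : ℕ → ℝ) (j : ℕ) (x y : ℝ) :
    gk c e j y = (y - x) ^ (j+1) / (j+1).factorial
      + ∑ m ∈ range (j+1), gk c e m x * (y - x) ^ (j - m) / (j - m).factorial := by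
  have hsplit : ∑ m ∈ range (j+1), gk c e m x * (y - x) ^ (j - m) / (j - m).factorial
      = (∑ m ∈ range (j+1),
          (x + c) ^ (m+1) / (m+1).factorial * (y - x) ^ (j - m) / (j - m).factorial)
        + ∑ m ∈ range (j+1),
            (∑ i ∈ range m, e (m - i) * x ^ i / i.factorial)
              * (y - x) ^ (j - m) / (j - m).factorial := by
    rw [← Finset.sum_add_distrib]
    refine Finset.sum_congr rfl fun m _ => ?_
    rw [gk]
    ring
  rw [gk, hsplit]
  have T1 : (y + c) ^ (j+1) / ((j+1).factorial : ℝ)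
      = (y - x) ^ (j+1) / (j+1).factorial
        + ∑ m ∈ range (j+1),
            (x + c) ^ (m+1) / (m+1).factorial * (y - x) ^ (j - m) / (j - m).factorial := by
    have hyc : y + c = (x + c) + (y - x) := by ring
    rw [hyc, add_pow]
    rw [Finset.sum_range_succ'
      (fun s => (x + c) ^ s * (y - x) ^ (j + 1 - s) * ((j+1).choose s : ℝ)) (j+1)]
    simp only [pow_zero, one_mul, Nat.choose_zero_right, Nat.cast_one, mul_one, Nat.sub_zero]
    rw [add_div, Finset.sum_div, add_comm]
    congr 1
    refine Finset.sum_congr rfl fun m hm => ?_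
    have hmj : m ≤ j := by simpa [Nat.lt_succ_iff] using hm
    have hcc : ((j+1).choose (m+1) : ℝ)
        = ((j+1).factorial : ℝ) / ((m+1).factorial * ((j-m).factorial)) := by
      rw [Nat.cast_choose ℝ (by omega : m + 1 ≤ j + 1)]
      have : j + 1 - (m+1) = j - m := by omega
      rw [this]
    have h1 : j + 1 - (m+1) = j - m := by omega
    rw [h1, hcc]
    have hf1 : ((j+1).factorial : ℝ) ≠ 0 := Nat.cast_ne_zero.mpr (Nat.factorial_ne_zero _)
    have hf2 : ((m+1).factorial : ℝ) ≠ 0 := Nat.cast_ne_zero.mpr (Nat.factorial_ne_zero _)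
    have hf3 : ((j-m).factorial : ℝ) ≠ 0 := Nat.cast_ne_zero.mpr (Nat.factorial_ne_zero _)
    field_simp
  have T2 : ∑ i ∈ range j, e (j - i) * y ^ i / i.factorial
      = ∑ m ∈ range (j+1),
          (∑ i ∈ range m, e (m - i) * x ^ i / i.factorial)
            * (y - x) ^ (j - m) / (j - m).factorial := by
    have hy : ∀ i : ℕ, (y : ℝ) ^ i = ∑ t ∈ range (i+1),
        x ^ t * (y - x) ^ (i - t) * (i.choose t : ℝ) := by
      intro i
      have : y = x + (y - x) := by ring
      calc y ^ i = (x + (y - x)) ^ i := by rw [← this]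
        _ = _ := add_pow x (y - x) i
    calc ∑ i ∈ range j, e (j - i) * y ^ i / i.factorial
        = ∑ i ∈ range j, ∑ t ∈ range (i+1),
            e (j - i) * x ^ t * (y - x) ^ (i - t) / (t.factorial * (i - t).factorial) := by
          refine Finset.sum_congr rfl fun i _ => ?_
          rw [hy i, Finset.mul_sum, Finset.sum_div]
          refine Finset.sum_congr rfl fun t ht => ?_
          have hti : t ≤ i := by simpa [Nat.lt_succ_iff] using ht
          have hcc : ((i).choose t : ℝ)
              = ((i).factorial : ℝ) / ((t).factorial * ((i-t).factorial)) := by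
            rw [Nat.cast_choose ℝ hti]
          rw [hcc]
          have hf1 : ((i).factorial : ℝ) ≠ 0 := Nat.cast_ne_zero.mpr (Nat.factorial_ne_zero _)
          have hf2 : ((t).factorial : ℝ) ≠ 0 := Nat.cast_ne_zero.mpr (Nat.factorial_ne_zero _)
          have hf3 : ((i-t).factorial : ℝ) ≠ 0 := Nat.cast_ne_zero.mpr (Nat.factorial_ne_zero _)
          field_simp
      _ = ∑ m ∈ range (j+1), ∑ i ∈ range m,
            e (m - i) * x ^ i * (y - x) ^ (j - m) / (i.factorial * (j - m).factorial) := by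
          rw [Finset.sum_sigma', Finset.sum_sigma']
          refine Finset.sum_bij' (fun q _ => (⟨j - q.1 + q.2, q.2⟩ : Σ _ : ℕ, ℕ))
            (fun q _ => (⟨j - q.1 + q.2, q.2⟩ : Σ _ : ℕ, ℕ)) ?_ ?_ ?_ ?_ ?_
          · rintro ⟨i, t⟩ hq
            simp only [Finset.mem_sigma, Finset.mem_range] at hq ⊢
            omega
          · rintro ⟨m, i⟩ hq
            simp only [Finset.mem_sigma, Finset.mem_range] at hq ⊢
            omega
          · rintro ⟨i, t⟩ hq
            simp only [Finset.mem_sigma, Finset.mem_range] at hq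
            have h1 : j - (j - i + t) + t = i := by omega
            exact congrArg (fun z => (⟨z, t⟩ : Σ _ : ℕ, ℕ)) h1
          · rintro ⟨m, i⟩ hq
            simp only [Finset.mem_sigma, Finset.mem_range] at hq
            have h1 : j - (j - m + i) + i = m := by omega
            exact congrArg (fun z => (⟨z, i⟩ : Σ _ : ℕ, ℕ)) h1
          · rintro ⟨i, t⟩ hq
            simp only [Finset.mem_sigma, Finset.mem_range] at hq
            have h1 : j - (j - i + t) = i - t := by omega
            have h2 : (j - i + t) - t = j - i := by omega
            rw [h1, h2]
      _ = _ := by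
          refine Finset.sum_congr rfl fun m _ => ?_
          rw [Finset.sum_mul, Finset.sum_div]
          refine Finset.sum_congr rfl fun i _ => ?_
          ring
  rw [T1, T2]
  ring

lemma neg_one_sq_pow (k : ℕ) : ((-1 : ℝ)) ^ k * ((-1 : ℝ)) ^ k = 1 := by
  rw [← pow_add]
  exact Even.neg_one_pow ⟨k, rfl⟩

lemma neg_one_pow_cancel {x y : ℝ} (k : ℕ) (h : (-1 : ℝ) ^ k * x = y) :
    x = (-1 : ℝ) ^ k * y := by
  calc x = ((-1 : ℝ) ^ k * (-1 : ℝ) ^ k) * x := by rw [neg_one_sq_pow, one_mul]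
    _ = (-1 : ℝ) ^ k * ((-1 : ℝ) ^ k * x) := by ring
    _ = (-1 : ℝ) ^ k * y := by rw [h]

lemma negpow_sub (j m : ℕ) (h : m ≤ j) :
    ((-1 : ℝ)) ^ (j - m) = (-1 : ℝ) ^ j * (-1 : ℝ) ^ m := by
  have h1 : j + m = (j - m) + 2*m := by omega
  have h2 : ((-1 : ℝ)) ^ (j + m) = (-1 : ℝ) ^ (j - m) := by
    rw [h1, pow_add, pow_mul, neg_one_sq, one_pow, mul_one]
  rw [← h2, pow_add]

lemma alphaA_gk (n : ℕ) (a c : ℝ) (δ : ℕ → ℝ) (j : ℕ) (hj : j < n) :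
    alphaA n a c δ j = (-1 : ℝ) ^ (j+1) * gk c (fun s => δ (n - 1 - s)) j a := by
  rw [alphaA, gk]
  congr 2
  refine Finset.sum_congr rfl fun i hi => ?_
  have hi' : i < j := Finset.mem_range.mp hi
  have hidx : i + n - 1 - j = n - 1 - (j - i) := by omega
  rw [hidx]

lemma alphaB_gk (n : ℕ) (b c : ℝ) (δ : ℕ → ℝ) (j : ℕ) (hj : j < n) :
    alphaB n b c δ j = (-1 : ℝ) ^ j * gk c (fun s => δ (n - 1 - s)) j b := by
  rw [alphaB, gk]
  congr 2
  refine Finset.sum_congr rfl fun i hi => ?_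
  have hi' : i < j := Finset.mem_range.mp hi
  have hidx : i + n - 1 - j = n - 1 - (j - i) := by omega
  rw [hidx]

/-- Redundancy theorem: `α_j^a = w_j^a` for all `j < n` iff
`α_j^b = w_j^b` for all `j < n`. -/
theorem stmt4 (n : ℕ) (hn : 1 ≤ n) (a b : ℝ) (hab : a < b) (c : ℝ) (δ : ℕ → ℝ) :
    (∀ j < n, alphaA n a c δ j = wA n a b j) ↔ (∀ j < n, alphaB n b c δ j = wB n a b j) := by
  set e : ℕ → ℝ := fun s => δ (n - 1 - s) with he
  constructor
  · intro h j hj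
    have Q := quad_id n j hn hj
    rw [alphaB_gk n b c δ j hj, wB, wA_tsum n a b j hn hj]
    congr 1
    have hTay := taylor_g c e j a b
    have e4 : ∀ m ∈ range (j+1),
        gk c e m a * (b - a) ^ (j - m) / (j - m).factorial
        = (b - a) ^ (j+1) *
            (-((-1 : ℝ) ^ m * ((n : ℝ) * Tsum m (n - 1 - m)) / (j - m).factorial)) := by
      intro m hm
      have hmj : m ≤ j := by simpa [Nat.lt_succ_iff] using hm
      have hmn : m < n := by omega
      have h1 := h m hmn
      rw [alphaA_gk n a c δ m hmn] at h1
      have hga : gk c e m a = (-1 : ℝ) ^ (m+1) * wA n a b m := neg_one_pow_cancel (m+1) h1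
      rw [hga, wA_tsum n a b m hn hmn]
      have hpow : (b - a) ^ (m+1) * (b - a) ^ (j - m) = (b - a) ^ (j+1) := by
        rw [← pow_add]
        congr 1
        omega
      calc (-1 : ℝ) ^ (m+1) * ((b - a) ^ (m+1) * ((n : ℝ) * Tsum m (n - 1 - m)))
            * (b - a) ^ (j - m) / (j - m).factorial
          = ((b - a) ^ (m+1) * (b - a) ^ (j - m))
            * ((-1 : ℝ) ^ (m+1) * ((n : ℝ) * Tsum m (n - 1 - m)) / (j - m).factorial) := by
            ring
        _ = _ := by rw [hpow]; ring
    rw [Finset.sum_congr rfl e4, ← Finset.mul_sum, Finset.sum_neg_distrib] at hTay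
    rw [hTay]
    linear_combination (-(b - a) ^ (j+1)) * Q
  · intro h j hj
    have Q := quad_id n j hn hj
    rw [alphaA_gk n a c δ j hj, wA_tsum n a b j hn hj]
    have hTay := taylor_g c e j b a
    have e5 : ∀ m ∈ range (j+1),
        gk c e m b * (a - b) ^ (j - m) / (j - m).factorial
        = ((b - a) ^ (j+1) * (-1 : ℝ) ^ j) *
            ((-1 : ℝ) ^ m * ((n : ℝ) * Tsum m (n - 1 - m)) / (j - m).factorial) := by
      intro m hm
      have hmj : m ≤ j := by simpa [Nat.lt_succ_iff] using hm
      have hmn : m < n := by omega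
      have h1 := h m hmn
      rw [alphaB_gk n b c δ m hmn, wB] at h1
      have hgb : gk c e m b = wA n a b m :=
        mul_left_cancel₀ (pow_ne_zero m (by norm_num : (-1 : ℝ) ≠ 0)) h1
      rw [hgb, wA_tsum n a b m hn hmn]
      have hab2 : (a - b) ^ (j - m) = (-1 : ℝ) ^ (j - m) * (b - a) ^ (j - m) := by
        rw [show a - b = -(b - a) by ring, neg_pow]
      rw [hab2, negpow_sub j m hmj]
      have hpow : (b - a) ^ (m+1) * (b - a) ^ (j - m) = (b - a) ^ (j+1) := by
        rw [← pow_add]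
        congr 1
        omega
      calc (b - a) ^ (m+1) * ((n : ℝ) * Tsum m (n - 1 - m))
            * ((-1 : ℝ) ^ j * (-1 : ℝ) ^ m * (b - a) ^ (j - m)) / (j - m).factorial
          = ((b - a) ^ (m+1) * (b - a) ^ (j - m))
            * ((-1 : ℝ) ^ j * ((-1 : ℝ) ^ m * ((n : ℝ) * Tsum m (n - 1 - m))
                / (j - m).factorial)) := by
            ring
        _ = _ := by rw [hpow]; ring
    rw [Finset.sum_congr rfl e5, ← Finset.mul_sum] at hTay
    have hab3 : (a - b) ^ (j+1) = (-1 : ℝ) ^ (j+1) * (b - a) ^ (j+1) := by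
      rw [show a - b = -(b - a) by ring, neg_pow]
    rw [hab3] at hTay
    have hS : ∑ m ∈ range (j+1),
        (-1 : ℝ) ^ m * ((n : ℝ) * Tsum m (n - 1 - m)) / (j - m).factorial
        = 1 / (j+1).factorial - (n : ℝ) * Tsum j (n - 1 - j) := by
      linarith [Q]
    rw [hS] at hTay
    have hval : gk c e j a
        = (-1 : ℝ) ^ (j+1) * ((b - a) ^ (j+1) * ((n : ℝ) * Tsum j (n - 1 - j))) := by
      rw [hTay, pow_succ]
      ring
    rw [hval]
    calc (-1 : ℝ) ^ (j+1) * ((-1 : ℝ) ^ (j+1)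
            * ((b - a) ^ (j+1) * ((n : ℝ) * Tsum j (n - 1 - j))))
        = ((-1 : ℝ) ^ (j+1) * (-1 : ℝ) ^ (j+1))
            * ((b - a) ^ (j+1) * ((n : ℝ) * Tsum j (n - 1 - j))) := by ring
      _ = _ := by rw [neg_one_sq_pow, one_mul]
end

section
/- Let n ≥ 1 be an integer, let a < b be real numbers, and suppose the real parameters θ = (c, δ_0, …, δ_{n-2}) satisfy α_j^a = w_j^a for all j = 0, …, n-1. Then the polynomial kernel P(·,θ) is orthogonal to all polynomials of degree at most n-1 on [a,b]: ∫_a^b f(x) P(x,θ) dx = 0 for every polynomial f of degree ≤ n-1. -/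
open Finset intervalIntegral

section Aux
open Polynomial


lemma claimT (j m : ℕ) : ∀ K : ℕ,
    (m : ℝ) * ∑ t ∈ Finset.range (K+1),
        (((j+t).choose j : ℝ) * (Nat.factorial (j+m+t)) / (Nat.factorial (2*j+m+t+2)))
      - ((j:ℝ)+2) * ((j:ℝ)+2*m+1) * ∑ s ∈ Finset.range K,
        (((j+s+1).choose (j+1) : ℝ) * (Nat.factorial (j+m+s)) / (Nat.factorial (2*j+m+s+3)))
    = ((m:ℝ) - K) * ((j+K+1).choose (j+1) : ℝ) * (Nat.factorial (j+m+K))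
        / (Nat.factorial (2*j+m+K+2)) := by
  intro K
  induction K with
  | zero =>
      simp [Nat.choose_self]
      ring
  | succ K ih =>
      rw [Finset.sum_range_succ]
      nth_rewrite 2 [Finset.sum_range_succ]
      rw [show j+(K+1) = j+K+1 by omega, show j+m+(K+1) = j+m+K+1 by omega,
        show 2*j+m+(K+1)+2 = 2*j+m+K+3 by omega]
      have hV : ((j:ℝ)+1) * ((j+K+1).choose (j+1) : ℝ)
          = ((K:ℝ)+1) * ((j+K+1).choose j : ℝ) := by
        have h := Nat.choose_succ_right_eq (j+K+1) j
        rw [show j+K+1-j = K+1 by omega] at h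
        have := congrArg (fun x : ℕ => (x:ℝ)) h
        push_cast at this
        linarith [this]
      have hPascal : (((j+K+1)+1).choose (j+1) : ℝ)
          = ((j+K+1).choose j : ℝ) + ((j+K+1).choose (j+1) : ℝ) := by
        rw [Nat.choose_succ_succ]; push_cast; ring
      have hf1 : ((Nat.factorial (j+m+K+1)) : ℝ) = ((j:ℝ)+m+K+1) * (Nat.factorial (j+m+K)) := by
        rw [show j+m+K+1 = (j+m+K)+1 from rfl, Nat.factorial_succ]; push_cast; ring
      have hf3 : (Nat.factorial (2*j+m+K+3) : ℝ)
          = (2*(j:ℝ)+m+K+3) * (Nat.factorial (2*j+m+K+2)) := by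
        rw [show 2*j+m+K+3 = (2*j+m+K+2)+1 from rfl, Nat.factorial_succ]; push_cast; ring
      rw [hf1, hf3, hPascal]
      push_cast
      have hx : (Nat.factorial (2*j+m+K+2) : ℝ) ≠ 0 := by
        exact_mod_cast Nat.factorial_ne_zero _
      have hy : (2*(j:ℝ)+m+K+3) ≠ 0 := by positivity
      set y : ℝ := 2*(j:ℝ)+m+K+3 with hydef
      set F1 : ℝ := (Nat.factorial (j+m+K) : ℝ) with hF1def
      set F2 : ℝ := (Nat.factorial (2*j+m+K+2) : ℝ) with hF2def
      set U : ℝ := ((j+K+1).choose j : ℝ) with hUdef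
      set V : ℝ := ((j+K+1).choose (j+1) : ℝ) with hVdef
      clear_value y F1 F2 U V
      have hyy : y * y⁻¹ = 1 := mul_inv_cancel₀ hy
      linear_combination ih + (-(((j:ℝ)+m+K+1) * F1/(y*F2))) * hV + (((m:ℝ)-K)*F1*V/(y*F2)) * hydef + (-(((m:ℝ)-K)*F1*V/F2)) * hyy

lemma closedT : ∀ m j : ℕ,
    ((j:ℝ)+m+1) * ∑ t ∈ Finset.range (m+1),
        (((j+t).choose j : ℝ) * (Nat.factorial (j+m+t)) / (Nat.factorial (2*j+m+t+2)))
    = (((j+m+1).choose (j+1) : ℝ)) * (Nat.factorial (j+2*m+1))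
        / (Nat.factorial (2*j+2*m+2)) := by
  intro m
  induction m with
  | zero =>
      intro j
      simp [Nat.choose_self, Nat.choose_succ_self_right]
      rw [Nat.factorial_succ j]
      push_cast
      ring
  | succ m ih =>
      intro j
      have E1 := claimT j (m+1) (m+1)
      have E2 := ih (j+1)
      -- normalize E2's sum to match E1's second sum
      have hsum : ∑ t ∈ Finset.range (m+1),
            (((j+1+t).choose (j+1) : ℝ) * (Nat.factorial (j+1+m+t)) / (Nat.factorial (2*(j+1)+m+t+2)))
          = ∑ s ∈ Finset.range (m+1),
            (((j+s+1).choose (j+1) : ℝ) * (Nat.factorial (j+(m+1)+s)) / (Nat.factorial (2*j+(m+1)+s+3))) := by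
        refine Finset.sum_congr rfl (fun s _ => ?_)
        rw [show j+1+s = j+s+1 by omega, show j+1+m+s = j+(m+1)+s by omega,
          show 2*(j+1)+m+s+2 = 2*j+(m+1)+s+3 by omega]
      rw [hsum] at E2
      simp only [sub_self] at E1
      have hC : ((j:ℝ)+2) * ((j+m+2).choose (j+2) : ℝ) = ((m:ℝ)+1) * ((j+m+2).choose (j+1) : ℝ) := by
        have h := Nat.choose_succ_right_eq (j+m+2) (j+1)
        rw [show j+m+2-(j+1) = m+1 by omega] at h
        have := congrArg (fun x : ℕ => (x:ℝ)) h
        push_cast at this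
        linarith [this]
      have hfact : (Nat.factorial (j+2*m+3) : ℝ) = ((j:ℝ)+2*m+3) * (Nat.factorial (j+2*m+2)) := by
        rw [show j+2*m+3 = (j+2*m+2)+1 from rfl, Nat.factorial_succ]; push_cast; ring
      -- normalize index forms in E1, E2 and goal
      rw [show j+1+1 = j+2 by omega, show j+1+m+1 = j+m+2 by omega,
        show j+1+2*m+1 = j+2*m+2 by omega, show 2*(j+1)+2*m+2 = 2*j+2*m+4 by omega] at E2
      rw [show j+(m+1)+1 = j+m+2 by omega, show j+2*(m+1)+1 = j+2*m+3 by omega,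
        show 2*j+2*(m+1)+2 = 2*j+2*m+4 by omega]
      push_cast at E1 E2 ⊢
      refine mul_left_cancel₀ (show ((m:ℝ)+1) ≠ 0 by positivity) ?_
      linear_combination ((j:ℝ)+m+2) * E1 + (((j:ℝ)+2)*((j:ℝ)+2*m+3)) * E2
        + (((j:ℝ)+2*m+3) * (Nat.factorial (j+2*m+2) : ℝ) / (Nat.factorial (2*j+2*m+4) : ℝ)) * hC
        + (-(((m:ℝ)+1) * (((j+m+2).choose (j+1) : ℕ) : ℝ) / (Nat.factorial (2*j+2*m+4) : ℝ))) * hfact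

lemma keyIdentity (n j : ℕ) (hj : j < n) :
    (n:ℝ) * ∑ k ∈ Finset.Icc j (n-1),
        ((k.choose j : ℝ) * (Nat.factorial (n+k-j-1)) / (Nat.factorial (n+k+1)))
    = ((n.choose (j+1) : ℝ)) * (Nat.factorial (2*n-1-j)) / (Nat.factorial (2*n)) := by
  obtain ⟨m, rfl⟩ : ∃ m, n = j + m + 1 := ⟨n - j - 1, by omega⟩
  have h1 : Finset.Icc j (j+m+1-1) = Finset.Ico j (j+m+1) := by
    rw [show j+m+1-1 = j+m by omega, ← Finset.Ico_add_one_right_eq_Icc]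
  rw [h1, Finset.sum_Ico_eq_sum_range, show j+m+1-j = m+1 by omega]
  have h2 : ∀ t ∈ Finset.range (m+1),
      (((j+t).choose j : ℝ) * (Nat.factorial (j+m+1+(j+t)-j-1)) / (Nat.factorial (j+m+1+(j+t)+1)))
      = (((j+t).choose j : ℝ) * (Nat.factorial (j+m+t)) / (Nat.factorial (2*j+m+t+2))) := by
    intro t _
    rw [show j+m+1+(j+t)-j-1 = j+m+t by omega, show j+m+1+(j+t)+1 = 2*j+m+t+2 by omega]
  rw [Finset.sum_congr rfl h2]
  rw [show 2*(j+m+1)-1-j = j+2*m+1 by omega, show 2*(j+m+1) = 2*j+2*m+2 by omega]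
  have := closedT m j
  push_cast at this ⊢
  linarith [this]

lemma dvd_iterate_derivative (r : ℝ) (q : Polynomial ℝ) (e k : ℕ) (h : (X - C r)^e ∣ q) :
    (X - C r)^(e-k) ∣ Polynomial.derivative^[k] q := by
  induction k generalizing q e with
  | zero => simpa using h
  | succ k ih =>
      rw [Function.iterate_succ_apply]
      have : (X - C r)^(e-1) ∣ Polynomial.derivative q := by
        obtain ⟨u, rfl⟩ := h
        rw [Polynomial.derivative_mul, Polynomial.derivative_pow, Polynomial.derivative_X_sub_C,
          mul_one]
        exact dvd_add (Dvd.dvd.mul_right (Dvd.dvd.mul_left (dvd_refl _) _) _)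
          ((pow_dvd_pow _ (by omega)).mul_right _)
      have := ih _ _ this
      rwa [show e-1-k = e-(k+1) by omega] at this
  
lemma eval_iterate_derivative_eq_zero (r : ℝ) (q : Polynomial ℝ) (e k : ℕ) (hk : k < e)
    (h : (X - C r)^e ∣ q) : (Polynomial.derivative^[k] q).eval r = 0 := by
  have := dvd_iterate_derivative r q e k h
  obtain ⟨u, hu⟩ := this
  rw [hu, Polynomial.eval_mul, Polynomial.eval_pow, Polynomial.eval_sub, Polynomial.eval_X,
    Polynomial.eval_C, sub_self, zero_pow (by omega), zero_mul]

lemma ortho (n : ℕ) (hn : 1 ≤ n) (a b : ℝ) (f : Polynomial ℝ)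
    (hf : Polynomial.derivative^[n] f = 0) :
    ∫ x in a..b, f.eval x *
      (Polynomial.derivative^[n] ((X - C a)^n * (X - C b)^n)).eval x = 0 := by
  set S : Polynomial ℝ := (X - C a)^n * (X - C b)^n with hS
  set u : ℕ → Polynomial ℝ := fun i =>
    (-1 : ℝ)^i • (Polynomial.derivative^[i] f * Polynomial.derivative^[n-i] S) with hu
  set H : Polynomial ℝ := ∑ j ∈ Finset.range n,
    (-1 : ℝ)^j • (Polynomial.derivative^[j] f * Polynomial.derivative^[n-1-j] S) with hH
  have hderiv : Polynomial.derivative H = f * Polynomial.derivative^[n] S := by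
    rw [hH, map_sum]
    have : ∀ j ∈ Finset.range n,
        Polynomial.derivative ((-1 : ℝ)^j • (Polynomial.derivative^[j] f
          * Polynomial.derivative^[n-1-j] S)) = u j - u (j+1) := by
      intro j hj
      have hjn : j < n := Finset.mem_range.mp hj
      rw [Polynomial.derivative_smul, Polynomial.derivative_mul]
      have e1 : Polynomial.derivative (Polynomial.derivative^[n-1-j] S)
          = Polynomial.derivative^[n-j] S := by
        rw [show n-j = (n-1-j)+1 by omega]
        exact (Function.iterate_succ_apply' _ _ _).symm
      have e2 : Polynomial.derivative (Polynomial.derivative^[j] f)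
          = Polynomial.derivative^[j+1] f :=
        (Function.iterate_succ_apply' _ _ _).symm
      rw [e1, e2, hu]
      simp only [show n-(j+1) = n-1-j by omega]
      rw [pow_succ]
      module
    rw [Finset.sum_congr rfl this, Finset.sum_range_sub' u, hu]
    simp [hf]
  have hevala : H.eval a = 0 := by
    rw [hH, Polynomial.eval_finset_sum]
    refine Finset.sum_eq_zero fun j hj => ?_
    have hjn : j < n := Finset.mem_range.mp hj
    rw [Polynomial.eval_smul, Polynomial.eval_mul,
      eval_iterate_derivative_eq_zero a S n (n-1-j) (by omega) (Dvd.intro _ rfl), mul_zero,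
      smul_zero]
  have hevalb : H.eval b = 0 := by
    rw [hH, Polynomial.eval_finset_sum]
    refine Finset.sum_eq_zero fun j hj => ?_
    have hjn : j < n := Finset.mem_range.mp hj
    rw [Polynomial.eval_smul, Polynomial.eval_mul,
      eval_iterate_derivative_eq_zero b S n (n-1-j) (by omega) (Dvd.intro_left _ rfl), mul_zero,
      smul_zero]
  have hftc : ∫ x in a..b, (f * Polynomial.derivative^[n] S).eval x = H.eval b - H.eval a := by
    refine intervalIntegral.integral_eq_sub_of_hasDerivAt
      (f := fun x => H.eval x) (f' := fun x => (f * Polynomial.derivative^[n] S).eval x)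
      (fun x _ => ?_) ?_
    · have := H.hasDerivAt x
      rwa [hderiv] at this
    · exact (Polynomial.continuous _).intervalIntegrable _ _
  simp only [← Polynomial.eval_mul]
  rw [hftc, hevala, hevalb, sub_zero]

lemma Sexpand (n : ℕ) (a b : ℝ) :
    (X - C a)^n * (X - C b)^n
      = ∑ r ∈ Finset.range (n+1),
          C ((n.choose r : ℝ) * (a-b)^(n-r)) * (X - C a)^(n+r) := by
  have h : (X - C b : Polynomial ℝ) = (X - C a) + C (a-b) := by
    rw [map_sub]; ring
  rw [h, add_pow, Finset.mul_sum]
  refine Finset.sum_congr rfl fun r _ => ?_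
  rw [map_mul, ← map_pow, Polynomial.C_eq_natCast]
  ring_nf
lemma evalDerivS (n : ℕ) (a b : ℝ) (k : ℕ) :
    (Polynomial.derivative^[n+k] ((X - C a)^n * (X - C b)^n)).eval a
      = if k ≤ n then (n.choose k : ℝ) * (a-b)^(n-k) * (Nat.factorial (n+k)) else 0 := by
  rw [Sexpand, Polynomial.iterate_derivative_sum]
  have hterm : ∀ r ∈ Finset.range (n+1),
      (Polynomial.derivative^[n+k] (C ((n.choose r : ℝ) * (a-b)^(n-r)) * (X - C a)^(n+r))).eval a
      = if r = k ∧ k ≤ n then (n.choose k : ℝ) * (a-b)^(n-k) * (Nat.factorial (n+k)) else 0 := by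
    intro r hr
    have hrn : r ≤ n := by simpa [Nat.lt_succ_iff] using hr
    rw [Polynomial.iterate_derivative_C_mul, Polynomial.iterate_derivative_X_sub_pow]
    simp only [Polynomial.eval_mul, Polynomial.eval_smul, Polynomial.eval_pow,
      Polynomial.eval_sub, Polynomial.eval_X, Polynomial.eval_C, sub_self]
    rcases lt_trichotomy r k with h | h | h
    · rw [Nat.descFactorial_of_lt (by omega)]
      simp [show ¬ (r = k ∧ k ≤ n) by omega]
    · subst h
      rw [show n+r-(n+r) = 0 by omega, pow_zero, Nat.descFactorial_self]
      simp [hrn]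
    · rw [zero_pow (show n+r-(n+k) ≠ 0 by omega)]
      simp [show ¬ (r = k ∧ k ≤ n) by omega]
  rw [Polynomial.eval_finset_sum, Finset.sum_congr rfl hterm]
  rcases le_or_gt k n with h | h
  · simp only [h, and_true]
    rw [Finset.sum_ite_eq' (Finset.range (n+1)) k]
    simp [Nat.lt_succ_iff, h]
  · refine (Finset.sum_eq_zero fun r hr => ?_).trans (by simp [show ¬ k ≤ n by omega])
    simp [show ¬ (r = k ∧ k ≤ n) by omega]

lemma Pk_eq (n : ℕ) (hn : 1 ≤ n) (a b c : ℝ) (δ : ℕ → ℝ)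
    (hmatch : ∀ j < n, alphaA n a c δ j = wA n a b j) :
    (C ((Nat.factorial n : ℝ)⁻¹) * (X - C (-c))^n
      + ∑ i ∈ Finset.range (n-1), C (δ i * (Nat.factorial i : ℝ)⁻¹) * X^i : Polynomial ℝ)
    = C ((Nat.factorial (2*n) : ℝ)⁻¹)
        * Polynomial.derivative^[n] ((X - C a)^n * (X - C b)^n) := by
  set Pk : Polynomial ℝ := C ((Nat.factorial n : ℝ)⁻¹) * (X - C (-c))^n
      + ∑ i ∈ Finset.range (n-1), C (δ i * (Nat.factorial i : ℝ)⁻¹) * X^i with hPk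
  set Q : Polynomial ℝ := C ((Nat.factorial (2*n) : ℝ)⁻¹)
      * Polynomial.derivative^[n] ((X - C a)^n * (X - C b)^n) with hQ
  -- evaluation of iterated derivatives of Pk at a
  have hevalP : ∀ k, (Polynomial.derivative^[k] Pk).eval a
      = (Nat.factorial n : ℝ)⁻¹ * ((n.descFactorial k) * (a+c)^(n-k))
        + ∑ i ∈ Finset.range (n-1),
            δ i * (Nat.factorial i : ℝ)⁻¹ * ((i.descFactorial k) * a^(i-k)) := by
    intro k
    rw [hPk, iterate_map_add, Polynomial.iterate_derivative_C_mul,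
      Polynomial.iterate_derivative_X_sub_pow, Polynomial.iterate_derivative_sum]
    rw [Polynomial.eval_add, Polynomial.eval_mul, Polynomial.eval_C, Polynomial.eval_smul,
      Polynomial.eval_pow, Polynomial.eval_sub, Polynomial.eval_X, Polynomial.eval_C,
      Polynomial.eval_finset_sum]
    congr 1
    · rw [sub_neg_eq_add]
      simp [mul_comm]
    · refine Finset.sum_congr rfl fun i _ => ?_
      rw [Polynomial.iterate_derivative_C_mul, Polynomial.iterate_derivative_X_pow_eq_smul,
        Polynomial.eval_mul, Polynomial.eval_C, Polynomial.eval_smul, Polynomial.eval_pow,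
        Polynomial.eval_X]
      simp [mul_assoc, mul_comm]
  -- evaluation of iterated derivatives of Q at a
  have hevalQ : ∀ k, (Polynomial.derivative^[k] Q).eval a
      = (Nat.factorial (2*n) : ℝ)⁻¹ *
        (if k ≤ n then (n.choose k : ℝ) * (a-b)^(n-k) * (Nat.factorial (n+k)) else 0) := by
    intro k
    rw [hQ, Polynomial.iterate_derivative_C_mul]
    have : Polynomial.derivative^[k] (Polynomial.derivative^[n] ((X - C a)^n * (X - C b)^n))
        = Polynomial.derivative^[n+k] ((X - C a)^n * (X - C b)^n) := by
      rw [show n+k = k+n by omega, Function.iterate_add_apply]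
    rw [this, Polynomial.eval_mul, Polynomial.eval_C, evalDerivS]
  -- the match of evaluations
  have hmain : ∀ k, (Polynomial.derivative^[k] Pk).eval a = (Polynomial.derivative^[k] Q).eval a := by
    intro k
    rw [hevalP, hevalQ]
    rcases lt_trichotomy k n with hk | hk | hk
    · -- main case
      -- the delta sum
      have hds : ∑ i ∈ Finset.range (n-1),
            δ i * (Nat.factorial i : ℝ)⁻¹ * ((i.descFactorial k) * a^(i-k))
          = ∑ i ∈ Finset.range (n-1-k), δ (k+i) * a^i / (Nat.factorial i) := by
        have hsplit := Finset.sum_range_add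
          (fun i => δ i * (Nat.factorial i : ℝ)⁻¹ * ((i.descFactorial k) * a^(i-k)))
          k (n-1-k)
        rw [show k + (n-1-k) = n-1 by omega] at hsplit
        rw [hsplit]
        have h0 : ∑ i ∈ Finset.range k,
            δ i * (Nat.factorial i : ℝ)⁻¹ * ((i.descFactorial k) * a^(i-k)) = 0 :=
          Finset.sum_eq_zero fun i hi => by
            rw [Nat.descFactorial_of_lt (Finset.mem_range.mp hi)]
            simp
        rw [h0, zero_add]
        refine Finset.sum_congr rfl fun i _ => ?_
        have hfd : ((Nat.factorial i : ℝ)) * ((k+i).descFactorial k) = (Nat.factorial (k+i)) := by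
          have := Nat.factorial_mul_descFactorial (show k ≤ k+i by omega)
          rw [show k+i-k = i by omega] at this
          exact_mod_cast congrArg (fun x : ℕ => (x:ℝ)) this
        have hne : ((Nat.factorial (k+i) : ℝ)) ≠ 0 := by
          exact_mod_cast Nat.factorial_ne_zero _
        have hne2 : ((Nat.factorial i : ℝ)) ≠ 0 := by
          exact_mod_cast Nat.factorial_ne_zero _
        rw [show k+i-k = i by omega]
        field_simp
        linear_combination δ (k+i) * a^i * hfd
      -- first term
      have hft : (Nat.factorial n : ℝ)⁻¹ * ((n.descFactorial k) * (a+c)^(n-k))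
          = (a+c)^(n-k) / (Nat.factorial (n-k)) := by
        have hfd : ((Nat.factorial (n-k) : ℝ)) * (n.descFactorial k) = (Nat.factorial n) := by
          exact_mod_cast congrArg (fun x : ℕ => (x:ℝ)) (Nat.factorial_mul_descFactorial hk.le)
        have hne : ((Nat.factorial n : ℝ)) ≠ 0 := by exact_mod_cast Nat.factorial_ne_zero _
        have hne2 : ((Nat.factorial (n-k) : ℝ)) ≠ 0 := by exact_mod_cast Nat.factorial_ne_zero _
        field_simp
        linear_combination (a+c)^(n-k) * hfd
      -- use the hypothesis
      have hsum2 : ∑ i ∈ Finset.range (n-1-k), δ (i + n - 1 - (n-1-k)) * a ^ i / (Nat.factorial i)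
          = ∑ i ∈ Finset.range (n-1-k), δ (k+i) * a ^ i / (Nat.factorial i) :=
        Finset.sum_congr rfl fun i _ => by rw [show i + n - 1 - (n-1-k) = k+i by omega]
      have hki := keyIdentity n (n-1-k) (by omega)
      rw [show n-1-k+1 = n-k by omega, show 2*n-1-(n-1-k) = n+k by omega,
        Nat.choose_symm hk.le] at hki
      have hsign : ((-1:ℝ))^(n-k) * ((-1:ℝ))^(n-k) = 1 := by
        rw [← pow_add]
        exact Even.neg_one_pow ⟨n-k, by ring⟩
      have hsignb : ((-1:ℝ))^(n-k) * (b-a)^(n-k) = (a-b)^(n-k) := by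
        rw [← neg_pow, neg_sub]
      -- combine everything
      rw [hds, hft, if_pos hk.le]
      have expand : (a+c)^(n-k) / (Nat.factorial (n-k))
            + ∑ i ∈ Finset.range (n-1-k), δ (k+i) * a ^ i / (Nat.factorial i)
          = ((-1:ℝ))^(n-k) * alphaA n a c δ (n-1-k) := by
        rw [alphaA, show n-1-k+1 = n-k by omega, hsum2, ← mul_assoc, hsign, one_mul]
      rw [expand, hmatch (n-1-k) (by omega), wA, show n-1-k+1 = n-k by omega]
      linear_combination (((-1:ℝ))^(n-k) * (b-a)^(n-k)) * hki
        + (((n.choose k : ℕ) : ℝ) * ((Nat.factorial (n+k) : ℕ) : ℝ)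
            / ((Nat.factorial (2*n) : ℕ) : ℝ)) * hsignb
    · -- k = n
      rw [hk]
      have h0 : ∑ i ∈ Finset.range (n-1),
          δ i * (Nat.factorial i : ℝ)⁻¹ * ((i.descFactorial n) * a^(i-n)) = 0 :=
        Finset.sum_eq_zero fun i hi => by
          rw [Nat.descFactorial_of_lt (by have := Finset.mem_range.mp hi; omega)]
          simp
      rw [h0, add_zero, Nat.descFactorial_self, if_pos le_rfl, Nat.choose_self,
        Nat.sub_self, pow_zero, pow_zero, show n+n = 2*n by omega]
      have hne : ((Nat.factorial n : ℝ)) ≠ 0 := by exact_mod_cast Nat.factorial_ne_zero _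
      have hne2 : ((Nat.factorial (2*n) : ℝ)) ≠ 0 := by exact_mod_cast Nat.factorial_ne_zero _
      field_simp
      norm_num
    · -- k > n
      have h0 : ∑ i ∈ Finset.range (n-1),
          δ i * (Nat.factorial i : ℝ)⁻¹ * ((i.descFactorial k) * a^(i-k)) = 0 :=
        Finset.sum_eq_zero fun i hi => by
          rw [Nat.descFactorial_of_lt (by have := Finset.mem_range.mp hi; omega)]
          simp
      rw [h0, add_zero, Nat.descFactorial_of_lt hk, if_neg (by omega)]
      simp
  -- conclude polynomial equality
  have hall : ∀ k, (Polynomial.hasseDeriv k (Pk - Q)).eval a = 0 := by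
    intro k
    have h := Polynomial.factorial_smul_hasseDeriv (R := ℝ) k
    have h2 := congrFun h (Pk - Q)
    simp only [LinearMap.smul_apply] at h2
    have h3 : (Nat.factorial k : ℝ) * (Polynomial.hasseDeriv k (Pk - Q)).eval a
        = (Polynomial.derivative^[k] (Pk - Q)).eval a := by
      rw [← h2]
      simp [Polynomial.eval_smul]
    rw [Polynomial.iterate_derivative_sub, Polynomial.eval_sub, hmain k, sub_self] at h3
    have hne : ((Nat.factorial k : ℝ)) ≠ 0 := by exact_mod_cast Nat.factorial_ne_zero _
    exact (mul_eq_zero.mp h3).resolve_left hne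
  have htay : Polynomial.taylor a (Pk - Q) = 0 :=
    Polynomial.ext fun k => by rw [Polynomial.taylor_coeff, Polynomial.coeff_zero]; exact hall k
  have := Polynomial.taylor_injective a (htay.trans (map_zero (Polynomial.taylor a)).symm)
  exact sub_eq_zero.mp this

end Aux

/-- if the parameters match the Hermite weights at `a`, the polynomial kernel
`P(·,θ)` is orthogonal on `[a,b]` to all polynomials of degree at most `n-1`. -/
theorem stmt5 (n : ℕ) (hn : 1 ≤ n) (a b : ℝ) (hab : a < b) (c : ℝ) (δ : ℕ → ℝ)
    (hmatch : ∀ j < n, alphaA n a c δ j = wA n a b j) :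
    ∀ f : Polynomial ℝ, f.degree ≤ ((n - 1 : ℕ) : WithBot ℕ) →
      ∫ x in a..b, f.eval x * Pker n c δ x = 0 := by
  intro f hdeg
  have hf0 : Polynomial.derivative^[n] f = 0 :=
    Polynomial.iterate_derivative_eq_zero
      (lt_of_le_of_lt (Polynomial.natDegree_le_iff_degree_le.mpr hdeg) (by omega))
  have hPker : ∀ x : ℝ, Pker n c δ x
      = (Nat.factorial (2*n) : ℝ)⁻¹ *
        (Polynomial.derivative^[n] ((Polynomial.X - Polynomial.C a)^n * (Polynomial.X - Polynomial.C b)^n)).eval x := by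
    intro x
    have h := congrArg (fun p : Polynomial ℝ => p.eval x) (Pk_eq n hn a b c δ hmatch)
    simp only [Polynomial.eval_add, Polynomial.eval_mul, Polynomial.eval_C,
      Polynomial.eval_pow, Polynomial.eval_sub, Polynomial.eval_X,
      Polynomial.eval_finset_sum] at h
    have hsums : ∑ i ∈ Finset.range (n-1), δ i * x ^ i / (Nat.factorial i)
        = ∑ i ∈ Finset.range (n-1), δ i * ((Nat.factorial i : ℝ))⁻¹ * x ^ i :=
      Finset.sum_congr rfl fun i _ => by ring
    rw [Pker, ← h, sub_neg_eq_add, hsums]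
    ring
  simp only [hPker]
  have key := ortho n hn a b f hf0
  have hrw : ∀ x : ℝ, f.eval x * ((Nat.factorial (2*n) : ℝ)⁻¹ *
      (Polynomial.derivative^[n] ((Polynomial.X - Polynomial.C a)^n * (Polynomial.X - Polynomial.C b)^n)).eval x)
      = (Nat.factorial (2*n) : ℝ)⁻¹ * (f.eval x *
        (Polynomial.derivative^[n] ((Polynomial.X - Polynomial.C a)^n * (Polynomial.X - Polynomial.C b)^n)).eval x) := fun x => by ring
  simp only [hrw]
  rw [intervalIntegral.integral_const_mul, key, mul_zero]
end

section
/- Let n ≥ 1 be an integer, let a < b be real numbers, and let θ = (c, δ_0, …, δ_{n-2}) be real parameters such that ∫_a^b f(x) P(x,θ) dx = 0 for every polynomial f of degree ≤ n-1. Then the polynomial kernel is, up to sign, symmetric about the midpoint x = (a+b)/2: P(a+b-x, θ) = (-1)^n P(x, θ) for all real x. -/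
open Finset intervalIntegral

open Polynomial MeasureTheory

noncomputable def Ppoly (n : ℕ) (c : ℝ) (δ : ℕ → ℝ) : Polynomial ℝ :=
  C ((Nat.factorial n : ℝ)⁻¹) * (X + C c) ^ n +
    ∑ i ∈ Finset.range (n - 1), C (δ i / (Nat.factorial i)) * X ^ i

lemma Ppoly_eval (n : ℕ) (c : ℝ) (δ : ℕ → ℝ) (x : ℝ) :
    (Ppoly n c δ).eval x = Pker n c δ x := by
  simp only [Ppoly, Pker, eval_add, eval_mul, eval_pow, eval_C, eval_X, eval_finset_sum]
  congr 1
  · rw [div_eq_inv_mul]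
  · exact Finset.sum_congr rfl fun i _ => by rw [div_mul_eq_mul_div]

lemma sum_degree_lt (n : ℕ) (δ : ℕ → ℝ) :
    (∑ i ∈ Finset.range (n - 1), C (δ i / (Nat.factorial i)) * X ^ i).degree
      < ((n : ℕ) : WithBot ℕ) := by
  refine lt_of_le_of_lt (degree_sum_le _ _) ?_
  rw [Finset.sup_lt_iff (by exact_mod_cast WithBot.bot_lt_coe n)]
  intro i hi
  refine lt_of_le_of_lt (degree_C_mul_X_pow_le _ _) ?_
  exact_mod_cast Nat.cast_lt.2 (by simp at hi; omega)

lemma Ppoly_spec (n : ℕ) (c : ℝ) (δ : ℕ → ℝ) :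
    (Ppoly n c δ).degree = ((n : ℕ) : WithBot ℕ) ∧
      (Ppoly n c δ).leadingCoeff = (Nat.factorial n : ℝ)⁻¹ := by
  have hC : ((Nat.factorial n : ℝ)⁻¹) ≠ 0 := by positivity
  have h1 : (C ((Nat.factorial n : ℝ)⁻¹) * (X + C c) ^ n).degree = ((n : ℕ) : WithBot ℕ) := by
    rw [degree_C_mul hC, degree_pow, degree_X_add_C]
    simp
  have h2 := h1 ▸ sum_degree_lt n δ
  refine ⟨by rw [Ppoly, degree_add_eq_left_of_degree_lt h2, h1], ?_⟩
  rw [Ppoly, leadingCoeff_add_of_degree_lt' h2, leadingCoeff_mul, leadingCoeff_pow,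
    leadingCoeff_X_add_C, leadingCoeff_C]
  simp

/-- if the kernel is orthogonal to all polynomials of degree ≤ n-1 on `[a,b]`,
then it is symmetric (up to the sign `(-1)^n`) about the midpoint `(a+b)/2`. -/
theorem stmt6 (n : ℕ) (hn : 1 ≤ n) (a b : ℝ) (hab : a < b) (c : ℝ) (δ : ℕ → ℝ)
    (horth : ∀ f : Polynomial ℝ, f.degree ≤ ((n - 1 : ℕ) : WithBot ℕ) →
      ∫ x in a..b, f.eval x * Pker n c δ x = 0) :
    ∀ x : ℝ, Pker n c δ (a + b - x) = (-1 : ℝ) ^ n * Pker n c δ x := by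
  set σ : ℝ := (-1 : ℝ) ^ n with hσ
  have hσ2 : σ * σ = 1 := by
    rw [hσ, ← pow_add, ← two_mul, pow_mul]; norm_num
  set P : Polynomial ℝ := Ppoly n c δ with hP
  set L : Polynomial ℝ := C (a + b) - X with hL
  have hLdeg : L.natDegree = 1 := by
    rw [hL, ← neg_sub, natDegree_neg, natDegree_X_sub_C]
  have hLlc : L.leadingCoeff = -1 := by
    rw [hL, ← neg_sub, leadingCoeff_neg, leadingCoeff, natDegree_X_sub_C]
    simp
  have hLeval : ∀ x : ℝ, L.eval x = a + b - x := by intro x; simp [hL]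
  set Q : Polynomial ℝ := C σ * (P.comp L) with hQ
  obtain ⟨hPdeg, hPlc⟩ := Ppoly_spec n c δ
  rw [← hP] at hPdeg hPlc
  have hfac : ((Nat.factorial n : ℝ)⁻¹) ≠ 0 := by positivity
  have hP0 : P ≠ 0 := fun h => hfac (by rw [← hPlc, h, leadingCoeff_zero])
  have hPnat : P.natDegree = n := natDegree_eq_of_degree_eq_some hPdeg
  have hσ0 : σ ≠ 0 := by
    rw [hσ]; exact pow_ne_zero _ (by norm_num)
  -- degree and leading coefficient of Q
  have hcompnat : (P.comp L).natDegree = n := by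
    rw [natDegree_comp, hLdeg, hPnat, mul_one]
  have hcomplc : (P.comp L).leadingCoeff = (Nat.factorial n : ℝ)⁻¹ * σ := by
    rw [leadingCoeff_comp (by rw [hLdeg]; norm_num), hPlc, hLlc, hPnat, hσ]
  have hcomp0 : P.comp L ≠ 0 := fun h => by
    rw [h, leadingCoeff_zero] at hcomplc
    exact hfac (by cases mul_eq_zero.1 hcomplc.symm with
      | inl h => exact h
      | inr h => exact absurd h hσ0)
  have hQdeg : Q.degree = ((n : ℕ) : WithBot ℕ) := by
    rw [hQ, degree_C_mul (by exact hσ0), degree_eq_natDegree hcomp0, hcompnat]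
  have hQlc : Q.leadingCoeff = (Nat.factorial n : ℝ)⁻¹ := by
    rw [hQ, leadingCoeff_mul, leadingCoeff_C, hcomplc, ← mul_assoc, mul_comm σ, mul_assoc, hσ2,
      mul_one]
  -- the difference
  set D : Polynomial ℝ := P - Q with hD
  have hDdeg : D.degree ≤ ((n - 1 : ℕ) : WithBot ℕ) := by
    rcases eq_or_ne D 0 with h | h
    · rw [h, degree_zero]; exact bot_le
    · have hlt : D.degree < ((n : ℕ) : WithBot ℕ) := by
        rw [← hPdeg]
        exact degree_sub_lt (by rw [hPdeg, hQdeg]) hP0 (by rw [hPlc, hQlc])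
      have hnd : D.natDegree < n := (natDegree_lt_iff_degree_lt h).2 hlt
      have hnd' : D.natDegree ≤ n - 1 := by omega
      exact le_trans degree_le_natDegree (by exact_mod_cast hnd')
  -- first orthogonality: ∫ D · P = 0
  have h1 : ∫ x in a..b, D.eval x * Pker n c δ x = 0 := horth D hDdeg
  -- second: with f = D.comp L
  have hDLdeg : (D.comp L).degree ≤ ((n - 1 : ℕ) : WithBot ℕ) := by
    rcases eq_or_ne (D.comp L) 0 with h | h
    · rw [h, degree_zero]; exact bot_le
    · have hD0 : D ≠ 0 := fun hd => h (by rw [hd, zero_comp])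
      have hc : (D.comp L).natDegree ≤ n - 1 := by
        rw [natDegree_comp, hLdeg, mul_one]
        exact natDegree_le_iff_degree_le.2 hDdeg
      exact le_trans degree_le_natDegree (by exact_mod_cast hc)
  have h2 : ∫ x in a..b, D.eval (a + b - x) * Pker n c δ x = 0 := by
    have := horth (D.comp L) hDLdeg
    simpa only [eval_comp, hLeval] using this
  -- substitute x ↦ a+b-x
  have h3 : ∫ x in a..b, D.eval x * Pker n c δ (a + b - x) = 0 := by
    have hsub := intervalIntegral.integral_comp_sub_left (a := a) (b := b)
      (fun t => D.eval (a + b - t) * Pker n c δ t) (a + b)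
    have hx : ∀ x : ℝ, a + b - (a + b - x) = x := fun x => by ring
    have hl : a + b - b = a := by ring
    have hr : a + b - a = b := by ring
    rw [hl, hr] at hsub
    calc ∫ x in a..b, D.eval x * Pker n c δ (a + b - x)
        = ∫ x in a..b, D.eval (a + b - (a + b - x)) * Pker n c δ (a + b - x) := by
          refine intervalIntegral.integral_congr fun x _ => by rw [hx]
      _ = ∫ x in a..b, D.eval (a + b - x) * Pker n c δ x := hsub
      _ = 0 := h2
  -- hence ∫ D · Q = 0
  have hQeval : ∀ x : ℝ, Q.eval x = σ * Pker n c δ (a + b - x) := by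
    intro x
    rw [hQ, eval_mul, eval_C, eval_comp, hLeval, Ppoly_eval]
  have h4 : ∫ x in a..b, D.eval x * Q.eval x = 0 := by
    have : ∀ x : ℝ, D.eval x * Q.eval x = σ * (D.eval x * Pker n c δ (a + b - x)) := by
      intro x; rw [hQeval]; ring
    rw [intervalIntegral.integral_congr fun x _ => this x,
      intervalIntegral.integral_const_mul, h3, mul_zero]
  -- integrability
  have hcontD : Continuous fun x : ℝ => D.eval x := D.continuous
  have hcontP : Continuous fun x : ℝ => Pker n c δ x := by
    have : (fun x : ℝ => Pker n c δ x) = fun x => P.eval x := by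
      funext x; rw [Ppoly_eval]
    rw [this]; exact P.continuous
  have hintDP : IntervalIntegrable (fun x => D.eval x * Pker n c δ x) volume a b :=
    (hcontD.mul hcontP).intervalIntegrable a b
  have hintDQ : IntervalIntegrable (fun x => D.eval x * Q.eval x) volume a b :=
    (hcontD.mul Q.continuous).intervalIntegrable a b
  -- ∫ D² = 0
  have h5 : ∫ x in a..b, (D.eval x) ^ 2 = 0 := by
    have heq : ∀ x : ℝ, (D.eval x) ^ 2
        = D.eval x * Pker n c δ x - D.eval x * Q.eval x := by
      intro x
      rw [hD, eval_sub, ← Ppoly_eval n c δ x]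
      ring
    rw [intervalIntegral.integral_congr fun x _ => heq x,
      intervalIntegral.integral_sub hintDP hintDQ, h1, h4, sub_zero]
  -- deduce D = 0
  have hint2 : IntervalIntegrable (fun x => (D.eval x) ^ 2) volume a b :=
    (hcontD.pow 2).intervalIntegrable a b
  have h6 : (fun x => (D.eval x) ^ 2) =ᵐ[volume.restrict (Set.Ioc a b)] 0 := by
    rw [← intervalIntegral.integral_eq_zero_iff_of_le_of_nonneg_ae hab.le
      (Filter.Eventually.of_forall fun x => sq_nonneg _) hint2]
    exact h5
  have h7 : Set.EqOn (fun x => (D.eval x) ^ 2) 0 (Set.Ioc a b) := by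
    refine Measure.eqOn_of_ae_eq h6 (hcontD.pow 2).continuousOn continuousOn_const ?_
    rw [interior_Ioc, closure_Ioo hab.ne]
    exact Set.Ioc_subset_Icc_self
  have hD0 : D = 0 := by
    refine Polynomial.eq_zero_of_infinite_isRoot D (Set.Infinite.mono ?_ (Set.Ioc_infinite hab))
    intro x hx
    have := h7 hx
    simp only [Pi.zero_apply] at this
    exact pow_eq_zero_iff (by norm_num) |>.1 this
  -- conclude
  intro x
  have hPQ : P.eval x = Q.eval x := by
    have : P - Q = 0 := hD0
    have := sub_eq_zero.1 this
    rw [this]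
  rw [Ppoly_eval] at hPQ
  rw [hQeval] at hPQ
  have : σ * Pker n c δ x = σ * (σ * Pker n c δ (a + b - x)) := by rw [← hPQ]
  rw [← mul_assoc, hσ2, one_mul] at this
  exact this.symm
end

section
/- For every integer n ≥ 1, the combinatorial identity n · Σ_{k=0}^{n-1} (n+k-1)!/(n+k+1)! = 1/2 holds; equivalently, for real numbers a < b, the zeroth Hermite quadrature weight satisfies w_0^a = (b-a)/2. -/
open Finset intervalIntegral

lemma term_eq (m : ℕ) (hm : 1 ≤ m) :
    (Nat.factorial (m - 1) : ℝ) / (Nat.factorial (m + 1)) = 1 / m - 1 / (m + 1) := by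
  obtain ⟨j, rfl⟩ := Nat.exists_eq_add_of_le hm
  have h1 : (1 + j : ℕ) - 1 = j := by omega
  have h2 : (1 + j : ℕ) + 1 = j + 2 := by omega
  rw [h1, h2]
  have hf : (Nat.factorial (j + 2) : ℝ) = (j + 2) * (j + 1) * Nat.factorial j := by
    push_cast [Nat.factorial_succ]; ring
  have hj : (Nat.factorial j : ℝ) ≠ 0 := by positivity
  have hja : ((1 + j : ℕ) : ℝ) = (j : ℝ) + 1 := by push_cast; ring
  rw [hf, hja]
  have h3 : (j : ℝ) + 1 ≠ 0 := by positivity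
  have h4 : (j : ℝ) + 2 ≠ 0 := by positivity
  field_simp
  ring

lemma tele (n : ℕ) (hn : 1 ≤ n) (m : ℕ) :
    ∑ k ∈ Finset.range m, ((1 : ℝ) / (n + k) - 1 / (n + k + 1)) = 1 / n - 1 / (n + m) := by
  induction m with
  | zero => simp
  | succ m ih =>
      rw [Finset.sum_range_succ, ih]
      push_cast
      ring

/-- `n Σ_{k=0}^{n-1} (n+k-1)!/(n+k+1)! = 1/2`; equivalently `w_0^a = (b-a)/2`. -/
theorem stmt7 (n : ℕ) (hn : 1 ≤ n) :
    (n : ℝ) * (∑ k ∈ Finset.range n,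
        (Nat.factorial (n + k - 1) : ℝ) / (Nat.factorial (n + k + 1))) = 1 / 2
    ∧ ∀ a b : ℝ, a < b → wA n a b 0 = (b - a) / 2 := by
  have hn0 : (n : ℝ) ≠ 0 := by positivity
  have key : (n : ℝ) * (∑ k ∈ Finset.range n,
      (Nat.factorial (n + k - 1) : ℝ) / (Nat.factorial (n + k + 1))) = 1 / 2 := by
    have hsum : ∑ k ∈ Finset.range n,
        (Nat.factorial (n + k - 1) : ℝ) / (Nat.factorial (n + k + 1))
        = ∑ k ∈ Finset.range n, ((1 : ℝ) / (n + k) - 1 / (n + k + 1)) := by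
      refine Finset.sum_congr rfl fun k _ => ?_
      have := term_eq (n + k) (by omega)
      rw [this]; push_cast
      try ring_nf
    rw [hsum, tele n hn n]
    have h2 : ((n : ℝ) + n) ≠ 0 := by positivity
    field_simp
    ring
  refine ⟨key, fun a b _ => ?_⟩
  have hIcc : Finset.Icc 0 (n - 1) = Finset.range n := by
    ext k; simp only [Finset.mem_Icc, Finset.mem_range, Nat.zero_le, true_and]; omega
  simp only [wA, hIcc, pow_one, Nat.choose_zero_right, Nat.cast_one]
  have : ∑ k ∈ Finset.range n,
      (1 : ℝ) * (Nat.factorial (n + k - 0 - 1)) / (Nat.factorial (n + k + 1))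
      = ∑ k ∈ Finset.range n,
      (Nat.factorial (n + k - 1) : ℝ) / (Nat.factorial (n + k + 1)) := by
    refine Finset.sum_congr rfl fun k _ => ?_
    norm_num
  rw [this, mul_assoc, key]
  ring
end

section
/- Let n ≥ 1 be an integer and let a < b be real numbers. For any real parameters θ = (c, δ_0, …, δ_{n-2}), the equation α_0^a = w_0^a holds if and only if c = -(a+b)/2; moreover the value of c is independent of n. -/
open Finset intervalIntegral

lemma sumtel (n : ℕ) (hn : 1 ≤ n) :
    ∑ k ∈ Finset.range n, ((Nat.factorial (n + k - 1) : ℝ)) / (Nat.factorial (n + k + 1))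
      = 1 / (2 * n) := by
  have h : ∀ k ∈ Finset.range n,
      ((Nat.factorial (n + k - 1) : ℝ)) / (Nat.factorial (n + k + 1))
        = 1 / (n + k) - 1 / (n + k + 1) := by
    intro k _
    have h1 : n + k - 1 + 1 = n + k := by omega
    have h2 : (Nat.factorial (n + k + 1) : ℝ)
        = (n + k + 1) * ((n + k) * Nat.factorial (n + k - 1)) := by
      rw [show n + k + 1 = (n + k - 1) + 1 + 1 by omega, Nat.factorial_succ, Nat.factorial_succ]
      push_cast [h1]
      ring
    have hfpos : (0:ℝ) < Nat.factorial (n + k - 1) := by positivity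
    have hnk : (0:ℝ) < (n:ℝ) + k := by positivity
    rw [h2]
    field_simp
    ring
  rw [Finset.sum_congr rfl h]
  have := Finset.sum_range_sub' (f := fun k => (1:ℝ) / (n + k)) n
  simp only [Nat.cast_add, Nat.cast_one] at this ⊢
  rw [show (∑ k ∈ Finset.range n, ((1:ℝ) / (n + k) - 1 / (n + k + 1)))
      = ∑ k ∈ Finset.range n, ((fun k => (1:ℝ) / ((n:ℝ) + k)) k - (fun k => (1:ℝ) / ((n:ℝ) + k)) (k+1)) by
    apply Finset.sum_congr rfl; intro k _; push_cast; ring_nf, this]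
  have hnpos : (0:ℝ) < n := by exact_mod_cast hn
  push_cast
  field_simp
  ring

/-- for any `n ≥ 1`, `α_0^a = w_0^a` iff `c = -(a+b)/2`; in particular the
value of `c` is independent of `n`. -/
theorem stmt8 (a b : ℝ) (hab : a < b) :
    ∀ n : ℕ, 1 ≤ n → ∀ (c : ℝ) (δ : ℕ → ℝ),
      (alphaA n a c δ 0 = wA n a b 0 ↔ c = -(a + b) / 2) := by
  intro n hn c δ
  have hIcc : Finset.Icc 0 (n - 1) = Finset.range n := by
    rw [Finset.range_eq_Ico, Nat.Ico_zero_eq_range]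
    ext x; simp; omega
  have hA : alphaA n a c δ 0 = -(a + c) := by
    simp [alphaA]
  have hsum : ∀ k ∈ Finset.range n,
      ((k.choose 0 : ℝ) * (Nat.factorial (n + k - 0 - 1)) / (Nat.factorial (n + k + 1)))
        = ((Nat.factorial (n + k - 1) : ℝ)) / (Nat.factorial (n + k + 1)) := by
    intro k _; simp
  have hW : wA n a b 0 = (b - a) / 2 := by
    rw [wA, hIcc, Finset.sum_congr rfl hsum, sumtel n hn]
    have hnpos : (0:ℝ) < n := by exact_mod_cast hn
    field_simp
    ring
  rw [hA, hW]
  constructor <;> intro h <;> linarith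
end

section
/- Let n ≥ 1 be an integer and let a < b be real numbers. Then there exists a unique vector of real parameters θ = (c, δ_0, …, δ_{n-2}) satisfying α_j^a = w_j^a for all j = 0, …, n-1; it is given by the triangular recursion c = -(a+b)/2 and, for j = 1, …, n-1, δ_{n-1-j} = (-1)^{j+1} w_j^a - (a+c)^{j+1}/(j+1)! - Σ_{i=1}^{j-1} δ_{i+n-1-j} a^i/i!. -/
open Finset intervalIntegral

noncomputable def eAux (n : ℕ) (a b : ℝ) : ℕ → ℝ
  | j => (-1:ℝ)^(j+1) * wA n a b j - (a + (-(a+b)/2))^(j+1) / (Nat.factorial (j+1))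
      - ∑ i ∈ (Finset.Icc 1 (j-1)).attach,
          eAux n a b (j - i.1) * a ^ (i.1) / (Nat.factorial i.1)
  decreasing_by
    have := Finset.mem_Icc.mp i.2
    omega

lemma eAux_eq (n : ℕ) (a b : ℝ) (j : ℕ) :
    eAux n a b j = (-1:ℝ)^(j+1) * wA n a b j - (a + (-(a+b)/2))^(j+1) / (Nat.factorial (j+1))
      - ∑ i ∈ Finset.Icc 1 (j-1), eAux n a b (j - i) * a ^ i / (Nat.factorial i) := by
  rw [eAux]
  congr 1
  exact Finset.sum_attach (Finset.Icc 1 (j-1))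
    (fun i => eAux n a b (j - i) * a ^ i / (Nat.factorial i))

lemma sum_tele (n : ℕ) (hn : 1 ≤ n) :
    ∑ k ∈ Finset.Icc 0 (n-1), ((Nat.factorial (n + k - 1) : ℝ)) / (Nat.factorial (n + k + 1))
      = 1/(n:ℝ) - 1/(2*n) := by
  have h1 : Finset.Icc 0 (n-1) = Finset.range n := by
    ext x; simp [Finset.mem_Icc]; omega
  rw [h1]
  have key : ∀ k : ℕ, ((Nat.factorial (n + k - 1) : ℝ)) / (Nat.factorial (n + k + 1))
      = (fun m : ℕ => 1/((n:ℝ)+m)) k - (fun m : ℕ => 1/((n:ℝ)+m)) (k+1) := by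
    intro k
    obtain ⟨s, hs⟩ : ∃ s, n + k = s + 1 := ⟨n + k - 1, by omega⟩
    have hcast : (n:ℝ) + k = (s:ℝ) + 1 := by exact_mod_cast congrArg (Nat.cast : ℕ → ℝ) hs
    have hcast2 : (n:ℝ) + ((k+1 : ℕ):ℝ) = (s:ℝ) + 2 := by push_cast; push_cast at hcast; linarith
    simp only []
    rw [hs]
    simp only [Nat.add_sub_cancel]
    have hf : (Nat.factorial (s+1+1) : ℝ) = ((s:ℝ)+2)*((s:ℝ)+1)*Nat.factorial s := by
      rw [Nat.factorial_succ, Nat.factorial_succ]; push_cast; ring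
    rw [hf, hcast, hcast2]
    have hfs : (Nat.factorial s : ℝ) ≠ 0 := by
      exact_mod_cast s.factorial_ne_zero
    have h1 : (s:ℝ) + 1 ≠ 0 := by positivity
    have h2 : (s:ℝ) + 2 ≠ 0 := by positivity
    field_simp
    ring
  rw [Finset.sum_congr rfl (fun k _ => key k)]
  rw [Finset.sum_range_sub' (fun m : ℕ => 1/((n:ℝ)+m))]
  have hn0 : (n:ℝ) ≠ 0 := by positivity
  push_cast
  field_simp
  ring

lemma wA_zero (n : ℕ) (hn : 1 ≤ n) (a b : ℝ) : wA n a b 0 = (b - a)/2 := by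
  unfold wA
  simp only [Nat.choose_zero_right, Nat.cast_one, one_mul, pow_one, Nat.sub_zero]
  rw [sum_tele n hn]
  have hn0 : (n:ℝ) ≠ 0 := by positivity
  field_simp
  ring

lemma split_sum (j : ℕ) (hj : 1 ≤ j) (f : ℕ → ℝ) :
    ∑ i ∈ Finset.range j, f i = f 0 + ∑ i ∈ Finset.Icc 1 (j-1), f i := by
  have h : Finset.range j = insert 0 (Finset.Icc 1 (j-1)) := by
    ext x; simp [Finset.mem_Icc, Finset.mem_range]; omega
  rw [h, Finset.sum_insert (by simp)]

lemma neg_one_sq' (j : ℕ) : ((-1:ℝ)^(j+1)) * ((-1:ℝ)^(j+1)) = 1 := by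
  rw [← pow_add]
  exact Even.neg_one_pow ⟨j+1, rfl⟩

/-- there is a unique set of parameters `θ = (c, δ_0, …, δ_{n-2})` satisfying
`α_j^a = w_j^a` for all `j = 0, …, n-1`; it is given by `c = -(a+b)/2` and the triangular
recursion `δ_{n-1-j} = (-1)^(j+1) w_j^a - (a+c)^(j+1)/(j+1)! - Σ_{i=1}^{j-1} δ_{i+n-1-j} a^i/i!`. -/
theorem stmt9 (n : ℕ) (hn : 1 ≤ n) (a b : ℝ) (hab : a < b) :
    ∃ (c : ℝ) (δ : ℕ → ℝ),
      (∀ j < n, alphaA n a c δ j = wA n a b j)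
      ∧ c = -(a + b) / 2
      ∧ (∀ j, 1 ≤ j → j ≤ n - 1 →
          δ (n - 1 - j) = (-1 : ℝ) ^ (j + 1) * wA n a b j
            - (a + c) ^ (j + 1) / (Nat.factorial (j + 1))
            - ∑ i ∈ Finset.Icc 1 (j - 1), δ (i + n - 1 - j) * a ^ i / (Nat.factorial i))
      ∧ (∀ (c' : ℝ) (δ' : ℕ → ℝ), (∀ j < n, alphaA n a c' δ' j = wA n a b j) →
          c' = c ∧ ∀ i < n - 1, δ' i = δ i) := by
  set c : ℝ := -(a + b) / 2 with hc
  set δ : ℕ → ℝ := fun m => eAux n a b (n - 1 - m) with hδ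
  have hac : a + c = a + (-(a+b)/2) := by rw [hc]
  -- index facts
  have hidx : ∀ j, j ≤ n - 1 → n - 1 - (n - 1 - j) = j := fun j hj => by omega
  have hδj : ∀ j, j ≤ n - 1 → δ (n - 1 - j) = eAux n a b j := by
    intro j hj; rw [hδ]; simp only; rw [hidx j hj]
  have hδij : ∀ j, j ≤ n - 1 → ∀ i ∈ Finset.Icc 1 (j-1), δ (i + n - 1 - j) = eAux n a b (j - i) := by
    intro j hj i hi
    have := Finset.mem_Icc.mp hi
    rw [hδ]; simp only
    congr 1
    omega
  -- recursion clause
  have hrec : ∀ j, 1 ≤ j → j ≤ n - 1 →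
      δ (n - 1 - j) = (-1 : ℝ) ^ (j + 1) * wA n a b j
        - (a + c) ^ (j + 1) / (Nat.factorial (j + 1))
        - ∑ i ∈ Finset.Icc 1 (j - 1), δ (i + n - 1 - j) * a ^ i / (Nat.factorial i) := by
    intro j hj1 hj2
    rw [hδj j hj2, eAux_eq, ← hac]
    congr 1
    exact Finset.sum_congr rfl (fun i hi => by rw [hδij j hj2 i hi])
  -- main equations
  have hmain : ∀ j < n, alphaA n a c δ j = wA n a b j := by
    intro j hj
    rcases Nat.eq_zero_or_pos j with h0 | h1
    · subst h0
      unfold alphaA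
      simp only [Finset.range_zero, Finset.sum_empty, add_zero, pow_one, zero_add,
        Nat.factorial_one, Nat.cast_one, div_one]
      rw [wA_zero n hn a b, hc]
      ring
    · have hj2 : j ≤ n - 1 := by omega
      unfold alphaA
      rw [split_sum j h1]
      simp only [pow_zero, Nat.zero_add, Nat.factorial_zero, Nat.cast_one]
      rw [hδj j hj2]
      rw [Finset.sum_congr rfl (fun i hi => by rw [hδij j hj2 i hi] :
        ∀ i ∈ Finset.Icc 1 (j-1), δ (i + n - 1 - j) * a ^ i / (Nat.factorial i)
          = eAux n a b (j - i) * a ^ i / (Nat.factorial i))]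
      rw [eAux_eq, ← hac]
      have hsq := neg_one_sq' j
      set s := (-1:ℝ)^(j+1) with hs
      linear_combination wA n a b j * hsq
  refine ⟨c, δ, hmain, rfl, hrec, ?_⟩
  -- uniqueness
  intro c' δ' h
  have h0 := h 0 (by omega)
  have hc' : c' = c := by
    unfold alphaA at h0
    simp only [Finset.range_zero, Finset.sum_empty, add_zero, pow_one, zero_add,
      Nat.factorial_one, Nat.cast_one, div_one] at h0
    rw [wA_zero n hn a b] at h0
    rw [hc]; linarith
  subst hc'
  refine ⟨rfl, ?_⟩
  have key : ∀ j, 1 ≤ j → j ≤ n - 1 → δ' (n - 1 - j) = eAux n a b j := by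
    intro j
    induction j using Nat.strong_induction_on with
    | _ j ih =>
      intro hj1 hj2
      have hE := h j (by omega)
      unfold alphaA at hE
      rw [split_sum j hj1] at hE
      simp only [pow_zero, Nat.factorial_zero, Nat.cast_one] at hE
      have h00 : 0 + n - 1 - j = n - 1 - j := by omega
      rw [h00] at hE
      have hS : ∑ i ∈ Finset.Icc 1 (j-1), δ' (i + n - 1 - j) * a ^ i / (Nat.factorial i)
          = ∑ i ∈ Finset.Icc 1 (j-1), eAux n a b (j - i) * a ^ i / (Nat.factorial i) := by
        refine Finset.sum_congr rfl (fun i hi => ?_)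
        have hmem := Finset.mem_Icc.mp hi
        have h1 : i + n - 1 - j = n - 1 - (j - i) := by omega
        rw [h1, ih (j - i) (by omega) (by omega) (by omega)]
      rw [hS] at hE
      rw [eAux_eq, ← hac]
      set S := ∑ i ∈ Finset.Icc 1 (j-1), eAux n a b (j - i) * a ^ i / (Nat.factorial i)
      set X := (a + c) ^ (j + 1) / ((Nat.factorial (j + 1)):ℝ)
      set s := (-1:ℝ)^(j+1) with hs
      have hsq := neg_one_sq' j
      have h4 : δ' (n - 1 - j) = s * wA n a b j - X - S := by
        linear_combination s * hE - (X + δ' (n - 1 - j) + S) * hsq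
      linarith [h4]
  intro i hi
  have hj1 : 1 ≤ n - 1 - i := by omega
  have hj2 : n - 1 - i ≤ n - 1 := by omega
  have h5 : δ' i = δ' (n - 1 - (n - 1 - i)) := by congr 1; omega
  rw [h5, key (n - 1 - i) hj1 hj2, hδ]
end

section
/- Let n ≥ 2 be an integer and let a < b be real numbers. If the real parameters θ = (c, δ_0, …, δ_{n-2}) satisfy α_j^a = w_j^a for j = 0 and j = 1, then δ_{n-2} = -(b-a)^2 / (8(2n-1)). -/
open Finset intervalIntegral

lemma fact_ratio2 (m : ℕ) :
    ((Nat.factorial m : ℝ)) / (Nat.factorial (m+2)) = 1/(((m:ℝ)+1)*((m:ℝ)+2)) := by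
  rw [show m+2 = m+1+1 from rfl, Nat.factorial_succ, Nat.factorial_succ]
  have h : (Nat.factorial m : ℝ) ≠ 0 := by positivity
  push_cast
  field_simp
  ring

lemma fact_ratio3 (m : ℕ) :
    ((Nat.factorial m : ℝ)) / (Nat.factorial (m+3)) = 1/(((m:ℝ)+1)*((m:ℝ)+2)*((m:ℝ)+3)) := by
  rw [show m+3 = m+2+1 from rfl, show m+2 = m+1+1 from rfl, Nat.factorial_succ,
    Nat.factorial_succ, Nat.factorial_succ]
  have h : (Nat.factorial m : ℝ) ≠ 0 := by positivity
  push_cast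
  field_simp
  ring

lemma sum0 (m : ℕ) :
    ∑ k ∈ Finset.range (m+2), (1:ℝ)/((((m:ℝ)+(k:ℝ)+2))*((m:ℝ)+(k:ℝ)+3)) = 1/(2*((m:ℝ)+2)) := by
  have h : ∀ k ∈ Finset.range (m+2), (1:ℝ)/((((m:ℝ)+(k:ℝ)+2))*((m:ℝ)+(k:ℝ)+3))
      = (fun k : ℕ => -1/((m:ℝ)+(k:ℝ)+2)) (k+1) - (fun k : ℕ => -1/((m:ℝ)+(k:ℝ)+2)) k := by
    intro k _
    have h1 : (m:ℝ)+(k:ℝ)+2 ≠ 0 := by positivity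
    have h2 : (m:ℝ)+(k:ℝ)+3 ≠ 0 := by positivity
    simp only []
    push_cast
    field_simp
    ring
  rw [Finset.sum_congr rfl h, Finset.sum_range_sub (fun k : ℕ => -1/((m:ℝ)+(k:ℝ)+2))]
  have h1 : ((m:ℝ)+2) ≠ 0 := by positivity
  push_cast
  field_simp
  ring

lemma sum1 (m : ℕ) :
    ∑ k ∈ Finset.range (m+1),
      ((k:ℝ)+1)/((((m:ℝ)+(k:ℝ)+2))*((m:ℝ)+(k:ℝ)+3)*((m:ℝ)+(k:ℝ)+4))
      = ((m:ℝ)+1)/(4*((m:ℝ)+2)*(2*(m:ℝ)+3)) := by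
  have h : ∀ k ∈ Finset.range (m+1),
      ((k:ℝ)+1)/((((m:ℝ)+(k:ℝ)+2))*((m:ℝ)+(k:ℝ)+3)*((m:ℝ)+(k:ℝ)+4))
      = (fun k : ℕ => (-((m:ℝ)+(k:ℝ)+2) + ((m:ℝ)+1)/2)/(((m:ℝ)+(k:ℝ)+2)*((m:ℝ)+(k:ℝ)+3))) (k+1)
        - (fun k : ℕ => (-((m:ℝ)+(k:ℝ)+2) + ((m:ℝ)+1)/2)/(((m:ℝ)+(k:ℝ)+2)*((m:ℝ)+(k:ℝ)+3))) k := by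
    intro k _
    have h1 : (m:ℝ)+(k:ℝ)+2 ≠ 0 := by positivity
    have h2 : (m:ℝ)+(k:ℝ)+3 ≠ 0 := by positivity
    have h3 : (m:ℝ)+(k:ℝ)+4 ≠ 0 := by positivity
    simp only []
    push_cast
    field_simp
    ring
  rw [Finset.sum_congr rfl h, Finset.sum_range_sub
    (fun k : ℕ => (-((m:ℝ)+(k:ℝ)+2) + ((m:ℝ)+1)/2)/(((m:ℝ)+(k:ℝ)+2)*((m:ℝ)+(k:ℝ)+3)))]
  have h1 : ((m:ℝ)+2) ≠ 0 := by positivity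
  have h2 : ((m:ℝ)+3) ≠ 0 := by positivity
  have h3 : (2*(m:ℝ)+3) ≠ 0 := by positivity
  have h4 : (2*(m:ℝ)+4) ≠ 0 := by positivity
  push_cast
  field_simp
  ring

lemma wA0 (m : ℕ) (a b : ℝ) : wA (m+2) a b 0 = (b-a)/2 := by
  unfold wA
  have hIcc : Finset.Icc 0 (m+2-1) = Finset.range (m+2) := by
    rw [show m+2-1 = m+1 from rfl, Finset.range_eq_Ico, ← Finset.Ico_add_one_right_eq_Icc]
    rfl
  rw [hIcc]
  have e : ∀ k ∈ Finset.range (m+2),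
      (k.choose 0 : ℝ) * (Nat.factorial (m+2+k-0-1)) / (Nat.factorial (m+2+k+1))
      = (1:ℝ)/((((m:ℝ)+(k:ℝ)+2))*((m:ℝ)+(k:ℝ)+3)) := by
    intro k _
    rw [Nat.choose_zero_right, Nat.cast_one, one_mul,
      show m+2+k-0-1 = m+k+1 from by omega, show m+2+k+1 = (m+k+1)+2 from by omega,
      fact_ratio2]
    push_cast
    ring_nf
  rw [Finset.sum_congr rfl e, sum0]
  have h1 : ((m:ℝ)+2) ≠ 0 := by positivity
  push_cast
  field_simp

lemma wA1 (m : ℕ) (a b : ℝ) :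
    wA (m+2) a b 1 = (b-a)^2 * ((m:ℝ)+1)/(4*(2*(m:ℝ)+3)) := by
  unfold wA
  have hIcc : Finset.Icc 1 (m+2-1) = Finset.Ico 1 (m+2) := by
    rw [show m+2-1 = m+1 from rfl, ← Finset.Ico_add_one_right_eq_Icc]
    rfl
  rw [hIcc, Finset.sum_Ico_eq_sum_range]
  have e : ∀ k ∈ Finset.range (m+2-1),
      ((1+k).choose 1 : ℝ) * (Nat.factorial (m+2+(1+k)-1-1)) / (Nat.factorial (m+2+(1+k)+1))
      = ((k:ℝ)+1)/((((m:ℝ)+(k:ℝ)+2))*((m:ℝ)+(k:ℝ)+3)*((m:ℝ)+(k:ℝ)+4)) := by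
    intro k _
    rw [Nat.choose_one_right,
      show m+2+(1+k)-1-1 = m+k+1 from by omega, show m+2+(1+k)+1 = (m+k+1)+3 from by omega]
    rw [mul_div_assoc, fact_ratio3]
    push_cast
    have h1 : (m:ℝ)+(k:ℝ)+2 ≠ 0 := by positivity
    have h2 : (m:ℝ)+(k:ℝ)+3 ≠ 0 := by positivity
    have h3 : (m:ℝ)+(k:ℝ)+4 ≠ 0 := by positivity
    field_simp
    ring
  rw [show m+2-1 = m+1 from by omega] at e ⊢
  rw [Finset.sum_congr rfl e, sum1]
  have h1 : ((m:ℝ)+2) ≠ 0 := by positivity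
  have h3 : (2*(m:ℝ)+3) ≠ 0 := by positivity
  push_cast
  field_simp

/-- if `α_j^a = w_j^a` for `j = 0, 1`, then `δ_{n-2} = -(b-a)²/(8(2n-1))`. -/
theorem stmt10 (n : ℕ) (hn : 2 ≤ n) (a b : ℝ) (hab : a < b) (c : ℝ) (δ : ℕ → ℝ)
    (h0 : alphaA n a c δ 0 = wA n a b 0) (h1 : alphaA n a c δ 1 = wA n a b 1) :
    δ (n - 2) = -(b - a) ^ 2 / (8 * (2 * (n : ℝ) - 1)) := by
  obtain ⟨m, rfl⟩ : ∃ m, n = m + 2 := ⟨n - 2, by omega⟩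
  rw [wA0] at h0
  rw [wA1] at h1
  have ha0 : alphaA (m+2) a c δ 0 = -(a+c) := by
    simp [alphaA]
  have ha1 : alphaA (m+2) a c δ 1 = (a+c)^2/2 + δ m := by
    simp [alphaA]
  rw [ha0] at h0
  rw [ha1] at h1
  have hac : a + c = -((b-a)/2) := by linarith
  have hd : δ m = (b-a)^2 * ((m:ℝ)+1)/(4*(2*(m:ℝ)+3)) - (a+c)^2/2 := by linarith
  rw [show m+2-2 = m from by omega, hd, hac]
  have h3 : (2*(m:ℝ)+3) ≠ 0 := by positivity
  push_cast
  rw [show (2:ℝ)*((m:ℝ)+2)-1 = 2*(m:ℝ)+3 from by ring]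
  field_simp
  ring
end

section
/- Let n ≥ 4 be an integer and let a < b be real numbers. If the real parameters θ = (c, δ_0, …, δ_{n-2}) satisfy α_j^a = w_j^a for j = 0, 1, 2, 3, then δ_{n-4} = (b-a)^2 [ (b-a)^2 + (6-4n)(a+b)^2 ] / (128(2n-3)(2n-1)). -/
open Finset intervalIntegral

namespace Stmt12Aux

lemma chooseTwoR (i : ℕ) : ((i+1).choose 2 : ℝ) = i*(i+1)/2 := by
  induction i with
  | zero => simp
  | succ i ih =>
    rw [show i+1+1 = (i+1)+1 from rfl, Nat.choose_succ_succ]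
    push_cast [ih, Nat.choose_one_right]; ring

lemma chooseThreeR (i : ℕ) : ((i+2).choose 3 : ℝ) = i*(i+1)*(i+2)/6 := by
  induction i with
  | zero => simp
  | succ i ih =>
    rw [show i+1+2 = (i+2)+1 from rfl, Nat.choose_succ_succ]
    push_cast [ih, chooseTwoR (i+1)]; ring

lemma chooseFourR (i : ℕ) : ((i+3).choose 4 : ℝ) = i*(i+1)*(i+2)*(i+3)/24 := by
  induction i with
  | zero => simp
  | succ i ih =>
    rw [show i+1+3 = (i+3)+1 from rfl, Nat.choose_succ_succ]
    push_cast [ih, chooseThreeR (i+1)]; ring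

lemma sum_Icc_shift (j n : ℕ) (f : ℕ → ℝ) :
    ∑ k ∈ Icc j n, f k = ∑ i ∈ range (n+1-j), f (j+i) := by
  rw [← Finset.Ico_add_one_right_eq_Icc, Finset.sum_Ico_eq_sum_range]

lemma fact_ne (t : ℕ) : ((t.factorial : ℕ) : ℝ) ≠ 0 := Nat.cast_ne_zero.2 (Nat.factorial_ne_zero _)

lemma factS (t : ℕ) : (((t+1).factorial : ℕ) : ℝ) = ((t:ℝ)+1) * t.factorial := by
  rw [Nat.factorial_succ]; push_cast; ring

noncomputable def G0 (m i : ℕ) : ℝ :=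
  (i : ℝ) * (Nat.factorial (m+3+i)) / (((m:ℝ)+4) * Nat.factorial (m+4+i))
noncomputable def G1 (m i : ℕ) : ℝ :=
  ((i+1).choose 2 : ℝ) * (Nat.factorial (m+3+i)) / (((m:ℝ)+4) * Nat.factorial (m+5+i))
noncomputable def G2 (m i : ℕ) : ℝ :=
  ((i+2).choose 3 : ℝ) * (Nat.factorial (m+3+i)) / (((m:ℝ)+4) * Nat.factorial (m+6+i))
noncomputable def G3 (m i : ℕ) : ℝ :=
  ((i+3).choose 4 : ℝ) * (Nat.factorial (m+3+i)) / (((m:ℝ)+4) * Nat.factorial (m+7+i))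

lemma tele0 (m i : ℕ) :
    (Nat.factorial (m+3+i) : ℝ) / (Nat.factorial (m+5+i)) = G0 m (i+1) - G0 m i := by
  unfold G0
  rw [show m+3+(i+1) = (m+3+i)+1 from by omega, factS (m+3+i),
    show m+4+(i+1) = ((m+4+i)+1) from by omega, factS (m+4+i),
    show m+5+i = ((m+4+i)+1) from by omega, factS (m+4+i)]
  have hF := fact_ne (m+4+i)
  have hA := fact_ne (m+3+i)
  have hm : ((m:ℝ)+4) ≠ 0 := by positivity
  have h5 : ((m+4+i:ℕ) : ℝ) + 1 ≠ 0 := by positivity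
  push_cast
  field_simp
  ring

lemma tele1 (m i : ℕ) :
    ((i+1).choose 1 : ℝ) * (Nat.factorial (m+3+i)) / (Nat.factorial (m+6+i))
      = G1 m (i+1) - G1 m i := by
  unfold G1
  rw [show m+3+(i+1) = (m+3+i)+1 from by omega, factS (m+3+i),
    show m+5+(i+1) = ((m+5+i)+1) from by omega, factS (m+5+i),
    show m+6+i = ((m+5+i)+1) from by omega, factS (m+5+i),
    show i+1+1 = (i+1)+1 from rfl, chooseTwoR (i+1), chooseTwoR i,
    Nat.choose_one_right]
  have hF := fact_ne (m+5+i)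
  have hA := fact_ne (m+3+i)
  have hm : ((m:ℝ)+4) ≠ 0 := by positivity
  have h6 : ((m+5+i:ℕ) : ℝ) + 1 ≠ 0 := by positivity
  push_cast
  field_simp
  ring

lemma tele2 (m i : ℕ) :
    ((i+2).choose 2 : ℝ) * (Nat.factorial (m+3+i)) / (Nat.factorial (m+7+i))
      = G2 m (i+1) - G2 m i := by
  unfold G2
  rw [show m+3+(i+1) = (m+3+i)+1 from by omega, factS (m+3+i),
    show m+6+(i+1) = ((m+6+i)+1) from by omega, factS (m+6+i),
    show m+7+i = ((m+6+i)+1) from by omega, factS (m+6+i),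
    show i+1+2 = (i+1)+2 from rfl, chooseThreeR (i+1), chooseThreeR i,
    show i+2 = (i+1)+1 from rfl, chooseTwoR (i+1)]
  have hF := fact_ne (m+6+i)
  have hA := fact_ne (m+3+i)
  have hm : ((m:ℝ)+4) ≠ 0 := by positivity
  have h7 : ((m+6+i:ℕ) : ℝ) + 1 ≠ 0 := by positivity
  push_cast
  field_simp
  ring

lemma tele3 (m i : ℕ) :
    ((i+3).choose 3 : ℝ) * (Nat.factorial (m+3+i)) / (Nat.factorial (m+8+i))
      = G3 m (i+1) - G3 m i := by
  unfold G3
  rw [show m+3+(i+1) = (m+3+i)+1 from by omega, factS (m+3+i),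
    show m+7+(i+1) = ((m+7+i)+1) from by omega, factS (m+7+i),
    show m+8+i = ((m+7+i)+1) from by omega, factS (m+7+i),
    show i+1+3 = (i+1)+3 from rfl, chooseFourR (i+1), chooseFourR i,
    show i+3 = (i+1)+2 from rfl, chooseThreeR (i+1)]
  have hF := fact_ne (m+7+i)
  have hA := fact_ne (m+3+i)
  have hm : ((m:ℝ)+4) ≠ 0 := by positivity
  have h8 : ((m+7+i:ℕ) : ℝ) + 1 ≠ 0 := by positivity
  push_cast
  field_simp
  ring

lemma G0zero (m : ℕ) : G0 m 0 = 0 := by norm_num [G0]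
lemma G1zero (m : ℕ) : G1 m 0 = 0 := by norm_num [G1]
lemma G2zero (m : ℕ) : G2 m 0 = 0 := by norm_num [G2]
lemma G3zero (m : ℕ) : G3 m 0 = 0 := by norm_num [G3]

lemma G0top (m : ℕ) : G0 m (m+4) = 1/(2*(m:ℝ)+8) := by
  unfold G0
  rw [show m+3+(m+4) = 2*m+7 from by omega, show m+4+(m+4) = (2*m+7)+1 from by omega,
    factS (2*m+7)]
  have hF := fact_ne (2*m+7)
  have hm : ((m:ℝ)+4) ≠ 0 := by positivity
  have h1 : ((2*m+7:ℕ):ℝ) + 1 ≠ 0 := by positivity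
  have h8 : 2*(m:ℝ)+8 ≠ 0 := by positivity
  push_cast
  field_simp
  ring

lemma G1top (m : ℕ) : G1 m (m+3) = ((m:ℝ)+3)/(2*(2*(m:ℝ)+7)*(2*(m:ℝ)+8)) := by
  unfold G1
  rw [chooseTwoR (m+3), show m+3+(m+3) = 2*m+6 from by omega,
    show m+5+(m+3) = (2*m+7)+1 from by omega, factS (2*m+7),
    show 2*m+7 = (2*m+6)+1 from by omega, factS (2*m+6)]
  have hF := fact_ne (2*m+6)
  have hm : ((m:ℝ)+4) ≠ 0 := by positivity
  have h7 : ((2*m+6:ℕ):ℝ) + 1 ≠ 0 := by positivity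
  have h8 : ((2*m+6:ℕ):ℝ) + 1 + 1 ≠ 0 := by positivity
  have k7 : 2*(m:ℝ)+7 ≠ 0 := by positivity
  have k8 : 2*(m:ℝ)+8 ≠ 0 := by positivity
  push_cast
  field_simp
  ring

lemma G2top (m : ℕ) :
    G2 m (m+2) = (((m:ℝ)+2)*((m:ℝ)+3))/(6*(2*(m:ℝ)+6)*(2*(m:ℝ)+7)*(2*(m:ℝ)+8)) := by
  unfold G2
  rw [chooseThreeR (m+2), show m+3+(m+2) = 2*m+5 from by omega,
    show m+6+(m+2) = (2*m+7)+1 from by omega, factS (2*m+7),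
    show 2*m+7 = (2*m+6)+1 from by omega, factS (2*m+6),
    show 2*m+6 = (2*m+5)+1 from by omega, factS (2*m+5)]
  have hF := fact_ne (2*m+5)
  have hm : ((m:ℝ)+4) ≠ 0 := by positivity
  have h6 : ((2*m+5:ℕ):ℝ) + 1 ≠ 0 := by positivity
  have h7 : ((2*m+5:ℕ):ℝ) + 1 + 1 ≠ 0 := by positivity
  have h8 : ((2*m+5:ℕ):ℝ) + 1 + 1 + 1 ≠ 0 := by positivity
  have k6 : 2*(m:ℝ)+6 ≠ 0 := by positivity
  have k7 : 2*(m:ℝ)+7 ≠ 0 := by positivity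
  have k8 : 2*(m:ℝ)+8 ≠ 0 := by positivity
  push_cast
  field_simp
  ring

lemma G3top (m : ℕ) :
    G3 m (m+1) = (((m:ℝ)+1)*((m:ℝ)+2)*((m:ℝ)+3))
      /(24*(2*(m:ℝ)+5)*(2*(m:ℝ)+6)*(2*(m:ℝ)+7)*(2*(m:ℝ)+8)) := by
  unfold G3
  rw [chooseFourR (m+1), show m+3+(m+1) = 2*m+4 from by omega,
    show m+7+(m+1) = (2*m+7)+1 from by omega, factS (2*m+7),
    show 2*m+7 = (2*m+6)+1 from by omega, factS (2*m+6),
    show 2*m+6 = (2*m+5)+1 from by omega, factS (2*m+5),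
    show 2*m+5 = (2*m+4)+1 from by omega, factS (2*m+4)]
  have hF := fact_ne (2*m+4)
  have hm : ((m:ℝ)+4) ≠ 0 := by positivity
  have h5 : ((2*m+4:ℕ):ℝ) + 1 ≠ 0 := by positivity
  have h6 : ((2*m+4:ℕ):ℝ) + 1 + 1 ≠ 0 := by positivity
  have h7 : ((2*m+4:ℕ):ℝ) + 1 + 1 + 1 ≠ 0 := by positivity
  have h8 : ((2*m+4:ℕ):ℝ) + 1 + 1 + 1 + 1 ≠ 0 := by positivity
  have k5 : 2*(m:ℝ)+5 ≠ 0 := by positivity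
  have k6 : 2*(m:ℝ)+6 ≠ 0 := by positivity
  have k7 : 2*(m:ℝ)+7 ≠ 0 := by positivity
  have k8 : 2*(m:ℝ)+8 ≠ 0 := by positivity
  push_cast
  field_simp
  ring

lemma wA0e (m : ℕ) (a b : ℝ) : wA (m+4) a b 0 = (b-a)/2 := by
  unfold wA
  rw [show m+4-1 = m+3 from rfl, sum_Icc_shift, show m+3+1-0 = m+4 from by omega]
  have hs : ∀ i ∈ range (m+4),
      ((0+i).choose 0 : ℝ) * (Nat.factorial (m+4+(0+i)-0-1)) / (Nat.factorial (m+4+(0+i)+1))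
      = G0 m (i+1) - G0 m i := by
    intro i _
    rw [show m+4+(0+i)-0-1 = m+3+i from by omega, show m+4+(0+i)+1 = m+5+i from by omega,
      Nat.choose_zero_right]
    push_cast
    rw [one_mul]
    exact tele0 m i
  rw [Finset.sum_congr rfl hs, Finset.sum_range_sub (G0 m) (m+4), G0zero, G0top]
  have h8 : 2*(m:ℝ)+8 ≠ 0 := by positivity
  push_cast
  field_simp
  ring

lemma wA1e (m : ℕ) (a b : ℝ) :
    wA (m+4) a b 1 = (b-a)^2 * ((m:ℝ)+3) / (4*(2*(m:ℝ)+7)) := by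
  unfold wA
  rw [show m+4-1 = m+3 from rfl, sum_Icc_shift, show m+3+1-1 = m+3 from by omega]
  have hs : ∀ i ∈ range (m+3),
      ((1+i).choose 1 : ℝ) * (Nat.factorial (m+4+(1+i)-1-1)) / (Nat.factorial (m+4+(1+i)+1))
      = G1 m (i+1) - G1 m i := by
    intro i _
    rw [show m+4+(1+i)-1-1 = m+3+i from by omega, show m+4+(1+i)+1 = m+6+i from by omega,
      show 1+i = i+1 from by omega]
    exact tele1 m i
  rw [Finset.sum_congr rfl hs, Finset.sum_range_sub (G1 m) (m+3), G1zero, G1top]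
  have k7 : 2*(m:ℝ)+7 ≠ 0 := by positivity
  have k8 : 2*(m:ℝ)+8 ≠ 0 := by positivity
  push_cast
  field_simp
  ring

lemma wA2e (m : ℕ) (a b : ℝ) :
    wA (m+4) a b 2 = (b-a)^3 * ((m:ℝ)+2) / (24*(2*(m:ℝ)+7)) := by
  unfold wA
  rw [show m+4-1 = m+3 from rfl, sum_Icc_shift, show m+3+1-2 = m+2 from by omega]
  have hs : ∀ i ∈ range (m+2),
      ((2+i).choose 2 : ℝ) * (Nat.factorial (m+4+(2+i)-2-1)) / (Nat.factorial (m+4+(2+i)+1))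
      = G2 m (i+1) - G2 m i := by
    intro i _
    rw [show m+4+(2+i)-2-1 = m+3+i from by omega, show m+4+(2+i)+1 = m+7+i from by omega,
      show 2+i = i+2 from by omega]
    exact tele2 m i
  rw [Finset.sum_congr rfl hs, Finset.sum_range_sub (G2 m) (m+2), G2zero, G2top]
  have k6 : 2*(m:ℝ)+6 ≠ 0 := by positivity
  have k7 : 2*(m:ℝ)+7 ≠ 0 := by positivity
  have k8 : 2*(m:ℝ)+8 ≠ 0 := by positivity
  push_cast
  field_simp
  ring

lemma wA3e (m : ℕ) (a b : ℝ) :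
    wA (m+4) a b 3 = (b-a)^4 * (((m:ℝ)+1)*((m:ℝ)+2)) / (96*(2*(m:ℝ)+5)*(2*(m:ℝ)+7)) := by
  unfold wA
  rw [show m+4-1 = m+3 from rfl, sum_Icc_shift, show m+3+1-3 = m+1 from by omega]
  have hs : ∀ i ∈ range (m+1),
      ((3+i).choose 3 : ℝ) * (Nat.factorial (m+4+(3+i)-3-1)) / (Nat.factorial (m+4+(3+i)+1))
      = G3 m (i+1) - G3 m i := by
    intro i _
    rw [show m+4+(3+i)-3-1 = m+3+i from by omega, show m+4+(3+i)+1 = m+8+i from by omega,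
      show 3+i = i+3 from by omega]
    exact tele3 m i
  rw [Finset.sum_congr rfl hs, Finset.sum_range_sub (G3 m) (m+1), G3zero, G3top]
  have k5 : 2*(m:ℝ)+5 ≠ 0 := by positivity
  have k6 : 2*(m:ℝ)+6 ≠ 0 := by positivity
  have k7 : 2*(m:ℝ)+7 ≠ 0 := by positivity
  have k8 : 2*(m:ℝ)+8 ≠ 0 := by positivity
  push_cast
  field_simp
  ring

end Stmt12Aux

open Stmt12Aux in
/-- if `α_j^a = w_j^a` for `j = 0, 1, 2, 3`, then
`δ_{n-4} = (b-a)²[(b-a)² + (6-4n)(a+b)²] / (128(2n-3)(2n-1))`. -/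
theorem stmt12 (n : ℕ) (hn : 4 ≤ n) (a b : ℝ) (hab : a < b) (c : ℝ) (δ : ℕ → ℝ)
    (h0 : alphaA n a c δ 0 = wA n a b 0) (h1 : alphaA n a c δ 1 = wA n a b 1)
    (h2 : alphaA n a c δ 2 = wA n a b 2) (h3 : alphaA n a c δ 3 = wA n a b 3) :
    δ (n - 4) = (b - a) ^ 2 * ((b - a) ^ 2 + (6 - 4 * (n : ℝ)) * (a + b) ^ 2)
      / (128 * (2 * (n : ℝ) - 3) * (2 * (n : ℝ) - 1)) := by
  obtain ⟨m, rfl⟩ : ∃ m, n = m + 4 := ⟨n - 4, by omega⟩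
  rw [wA0e] at h0; rw [wA1e] at h1; rw [wA2e] at h2; rw [wA3e] at h3
  simp only [alphaA, Finset.sum_range_succ, Finset.sum_range_zero] at h0 h1 h2 h3
  rw [show 0+(m+4)-1-1 = m+2 from by omega] at h1
  rw [show 0+(m+4)-1-2 = m+1 from by omega, show 1+(m+4)-1-2 = m+2 from by omega] at h2
  rw [show 0+(m+4)-1-3 = m from by omega, show 1+(m+4)-1-3 = m+1 from by omega,
    show 2+(m+4)-1-3 = m+2 from by omega] at h3
  rw [show m+4-4 = m from by omega]
  norm_num [Nat.factorial] at h0 h1 h2 h3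
  have h5 : (2*(m:ℝ)+5) ≠ 0 := by positivity
  have h7 : (2*(m:ℝ)+7) ≠ 0 := by positivity
  have he : a + c = -((b-a)/2) := by linarith
  have hd2 : δ (m+2) = (b-a)^2 * ((m:ℝ)+3) / (4*(2*(m:ℝ)+7)) - (a+c)^2/2 := by
    linear_combination h1
  have hd1 : δ (m+1) = -((b-a)^3 * ((m:ℝ)+2) / (24*(2*(m:ℝ)+7))) - (a+c)^3/6 - a * δ (m+2) := by
    linear_combination -h2
  have hd0 : δ m = (b-a)^4 * (((m:ℝ)+1)*((m:ℝ)+2)) / (96*(2*(m:ℝ)+5)*(2*(m:ℝ)+7))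
      - (a+c)^4/24 - a * δ (m+1) - a^2/2 * δ (m+2) := by
    linear_combination h3
  rw [hd0, hd1, hd2, he]
  push_cast
  rw [show 2*((m:ℝ)+4)-3 = 2*(m:ℝ)+5 from by ring, show 2*((m:ℝ)+4)-1 = 2*(m:ℝ)+7 from by ring]
  field_simp
  ring
end

section
/- Let n ≥ 1 be an integer and let a < b be real numbers. The Hermite quadrature rule is exact on polynomials of degree at most 2n-1: for every polynomial f of degree ≤ 2n-1, ∫_a^b f(x) dx = Σ_{j=0}^{n-1} w_j^a f^{(j)}(a) + Σ_{j=0}^{n-1} w_j^b f^{(j)}(b). -/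
open Finset intervalIntegral

open Polynomial

private lemma fact_ne (m : ℕ) : ((m.factorial : ℝ)) ≠ 0 := by
  exact_mod_cast m.factorial_ne_zero

/-- The key hypergeometric identity. -/
lemma key_sum (j : ℕ) : ∀ i : ℕ,
    ∑ t ∈ range (j + 1), ((i + t).choose i : ℝ) * (i + j + t).factorial /
        (2 * i + j + t + 2).factorial
      = (i + j).factorial * (i + 2 * j + 1).factorial /
        ((j.factorial) * ((i + 1).factorial) * (2 * i + 2 * j + 2).factorial) := by
  induction j with
  | zero =>
      intro i
      simp only [zero_add, range_one, sum_singleton, Nat.add_zero, mul_zero]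
      rw [Nat.choose_self]
      have h1 : (2 * i + 0 + 2) = 2 * i + 2 := by ring_nf
      have h2 : (i + 0) = i := by ring_nf
      rw [h1]
      have h3 : (2 * i + 2 * 0 + 2) = 2 * i + 2 := by ring_nf
      have h4 : (i + 2 * 0 + 1) = i + 1 := by ring_nf
      rw [h3, h4]
      have hne : ((i + 1).factorial : ℝ) ≠ 0 := fact_ne _
      have hne2 : ((2 * i + 2).factorial : ℝ) ≠ 0 := fact_ne _
      simp [Nat.factorial_zero]
      field_simp
  | succ j ih =>
      intro i
      -- abbreviations
      set e : ℕ → ℝ := fun t => ((i + j + 1 + t).factorial : ℝ) / ((2 * i + j + 3 + t).factorial)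
        with he
      -- pointwise identity:  (i+2) * a t = C(i+1+t,i+1) e t - C(i+2+t,i+1) e (t+1) + C(i+1+t,i) e (t+1)
      have hpt : ∀ t : ℕ,
          ((i + 2 : ℝ)) * (((i + 1 + t).choose (i + 1) : ℝ) * (i + j + 1 + t).factorial /
              (2 * i + j + t + 4).factorial)
            = (((i + 1 + t).choose (i + 1) : ℝ) * e t
                - ((i + 2 + t).choose (i + 1) : ℝ) * e (t + 1))
              + ((i + 1 + t).choose i : ℝ) * e (t + 1) := by
        intro t
        have pas : ((i + 2 + t).choose (i + 1)) = (i + 1 + t).choose i + (i + 1 + t).choose (i + 1) := by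
          have h : i + 2 + t = (i + 1 + t) + 1 := by ring
          rw [h, Nat.choose_succ_succ]
        rw [pas]
        push_cast
        have hf1 : ((2 * i + j + 3 + (t + 1)).factorial : ℝ)
            = (2 * i + j + t + 4) * (2 * i + j + 3 + t).factorial := by
          have : (2 * i + j + 3 + (t + 1)) = (2 * i + j + t + 3) + 1 := by ring
          rw [this, Nat.factorial_succ]
          push_cast
          ring_nf
        have hf2 : ((i + j + 1 + (t + 1)).factorial : ℝ)
            = (i + j + t + 2) * (i + j + 1 + t).factorial := by
          have : (i + j + 1 + (t + 1)) = (i + j + t + 1) + 1 := by ring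
          rw [this, Nat.factorial_succ]
          push_cast
          ring_nf
        have hf3 : ((2 * i + j + t + 4).factorial : ℝ)
            = (2 * i + j + t + 4) * (2 * i + j + 3 + t).factorial := by
          have : (2 * i + j + t + 4) = (2 * i + j + 3 + t) + 1 := by ring
          rw [this, Nat.factorial_succ]
          push_cast
          ring_nf
        simp only [he]
        rw [hf1, hf2, hf3]
        have hne1 : ((2 * i + j + 3 + t).factorial : ℝ) ≠ 0 := fact_ne _
        have hne2 : ((2 * i + j + t + 4) : ℝ) ≠ 0 := by positivity
        field_simp
        ring
      -- sum the pointwise identity over t ∈ range (j+1)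
      have hsum : ((i : ℝ) + 2) * (∑ t ∈ range (j + 1),
            ((i + 1 + t).choose (i + 1) : ℝ) * (i + j + 1 + t).factorial /
              (2 * i + j + t + 4).factorial)
          = (∑ t ∈ range (j + 2), ((i + t).choose i : ℝ) * e t)
            - ((i + j + 2).choose (i + 1) : ℝ) * e (j + 1) := by
        rw [mul_sum, sum_congr rfl (fun t _ => hpt t), sum_add_distrib]
        have tele : ∑ t ∈ range (j + 1),
            (((i + 1 + t).choose (i + 1) : ℝ) * e t - ((i + 2 + t).choose (i + 1) : ℝ) * e (t + 1))
            = ((i + 1).choose (i + 1) : ℝ) * e 0 - ((i + j + 2).choose (i + 1) : ℝ) * e (j + 1) := by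
          have h := Finset.sum_range_sub' (fun t => ((i + 1 + t).choose (i + 1) : ℝ) * e t) (j + 1)
          calc ∑ t ∈ range (j + 1),
              (((i + 1 + t).choose (i + 1) : ℝ) * e t - ((i + 2 + t).choose (i + 1) : ℝ) * e (t + 1))
              = ∑ t ∈ range (j + 1), (((i + 1 + t).choose (i + 1) : ℝ) * e t
                  - ((i + 1 + (t + 1)).choose (i + 1) : ℝ) * e (t + 1)) := by
                apply sum_congr rfl; intro t _
                rw [show i + 2 + t = i + 1 + (t + 1) by ring]
            _ = ((i + 1 + 0).choose (i + 1) : ℝ) * e 0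
                  - ((i + 1 + (j + 1)).choose (i + 1) : ℝ) * e (j + 1) := h
            _ = _ := by rw [show i + 1 + (j + 1) = i + j + 2 by ring]
        have shift : ∑ t ∈ range (j + 1), ((i + 1 + t).choose i : ℝ) * e (t + 1)
            = (∑ t ∈ range (j + 2), ((i + t).choose i : ℝ) * e t) - ((i).choose i : ℝ) * e 0 := by
          have h := Finset.sum_range_succ' (fun t => ((i + t).choose i : ℝ) * e t) (j + 1)
          rw [show j + 1 + 1 = j + 2 by ring] at h
          rw [h, sum_congr rfl (fun t (_ : t ∈ range (j + 1)) => by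
            rw [show i + (t + 1) = i + 1 + t by ring] :
            ∀ t ∈ range (j + 1), ((i + (t + 1)).choose i : ℝ) * e (t + 1)
              = ((i + 1 + t).choose i : ℝ) * e (t + 1))]
          simp only [Nat.add_zero]
          ring
        rw [tele, shift, Nat.choose_self, Nat.choose_self]
        push_cast
        ring
      -- induction hypothesis at i+1, reindexed
      have hmatch : ∑ t ∈ range (j + 1),
            ((i + 1 + t).choose (i + 1) : ℝ) * (i + j + 1 + t).factorial /
              (2 * i + j + t + 4).factorial
          = (i + j + 1).factorial * (i + 2 * j + 2).factorial /
              ((j.factorial) * ((i + 2).factorial) * (2 * i + 2 * j + 4).factorial) := by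
        have hih := ih (i + 1)
        calc ∑ t ∈ range (j + 1), ((i + 1 + t).choose (i + 1) : ℝ) * (i + j + 1 + t).factorial /
              (2 * i + j + t + 4).factorial
            = ∑ t ∈ range (j + 1), ((i + 1 + t).choose (i + 1) : ℝ) * (i + 1 + j + t).factorial /
              (2 * (i + 1) + j + t + 2).factorial := by
              apply sum_congr rfl; intro t _
              rw [show i + j + 1 + t = i + 1 + j + t by ring,
                show 2 * i + j + t + 4 = 2 * (i + 1) + j + t + 2 by ring]
          _ = ((i + 1 + j).factorial : ℝ) * (i + 1 + 2 * j + 1).factorial /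
              ((j.factorial) * ((i + 1 + 1).factorial) * ((2 * (i + 1) + 2 * j + 2).factorial)) := hih
          _ = _ := by
              rw [show i + 1 + j = i + j + 1 by ring, show i + 1 + 2 * j + 1 = i + 2 * j + 2 by ring,
                show i + 1 + 1 = i + 2 by ring, show 2 * (i + 1) + 2 * j + 2 = 2 * i + 2 * j + 4 by ring]
      -- rewrite the goal sum in terms of e
      have hgoal : ∑ t ∈ range (j + 1 + 1), ((i + t).choose i : ℝ) * (i + (j + 1) + t).factorial /
            (2 * i + (j + 1) + t + 2).factorial
          = ∑ t ∈ range (j + 2), ((i + t).choose i : ℝ) * e t := by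
        apply sum_congr (by norm_num)
        intro t _
        simp only [he]
        rw [show i + (j + 1) + t = i + j + 1 + t by ring,
          show 2 * i + (j + 1) + t + 2 = 2 * i + j + 3 + t by ring]
        ring
      rw [hgoal]
      have hval : (∑ t ∈ range (j + 2), ((i + t).choose i : ℝ) * e t)
          = ((i : ℝ) + 2) * ((i + j + 1).factorial * (i + 2 * j + 2).factorial /
              ((j.factorial) * ((i + 2).factorial) * (2 * i + 2 * j + 4).factorial))
            + ((i + j + 2).choose (i + 1) : ℝ) * e (j + 1) := by
        rw [← hmatch]; linarith [hsum]
      rw [hval]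
      have hclose : ((i + j + 2).choose (i + 1) : ℝ)
          = (i + j + 2).factorial / ((i + 1).factorial * (j + 1).factorial) := by
        rw [Nat.cast_choose ℝ (by omega : i + 1 ≤ i + j + 2),
          show i + j + 2 - (i + 1) = j + 1 by omega]
      rw [hclose]
      simp only [he]
      rw [show i + j + 1 + (j + 1) = i + 2 * j + 2 by ring,
        show 2 * i + j + 3 + (j + 1) = 2 * i + 2 * j + 4 by ring,
        show i + (j + 1) = i + j + 1 by ring,
        show i + 2 * (j + 1) + 1 = i + 2 * j + 3 by ring,
        show 2 * i + 2 * (j + 1) + 2 = 2 * i + 2 * j + 4 by ring,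
        show (j + 1).factorial = (j + 1) * j.factorial from Nat.factorial_succ j,
        show (i + 2).factorial = (i + 2) * (i + 1).factorial from Nat.factorial_succ (i + 1),
        show (i + 2 * j + 3).factorial = (i + 2 * j + 3) * (i + 2 * j + 2).factorial from
          Nat.factorial_succ (i + 2 * j + 2),
        show (i + j + 2).factorial = (i + j + 2) * (i + j + 1).factorial from
          Nat.factorial_succ (i + j + 1)]
      push_cast
      have h1 : ((j.factorial : ℝ)) ≠ 0 := fact_ne _
      have h2 : (((i + 1).factorial : ℝ)) ≠ 0 := fact_ne _
      have h3 : (((2 * i + 2 * j + 4).factorial : ℝ)) ≠ 0 := fact_ne _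
      have h4 : (((i + j + 1).factorial : ℝ)) ≠ 0 := fact_ne _
      have h5 : (((i + 2 * j + 2).factorial : ℝ)) ≠ 0 := fact_ne _
      field_simp
      ring


/-- Binomial expansion of the kernel around `c`. -/
lemma Kexp (n : ℕ) (c d : ℝ) :
    (X - C c) ^ n * (X - C d) ^ n
      = ∑ s ∈ range (n + 1), ((n.choose s : ℝ) * (c - d) ^ (n - s)) • (X - C c) ^ (n + s) := by
  have h : (X - C d : ℝ[X]) = (X - C c) + C (c - d) := by
    rw [map_sub]; ring
  rw [h, add_pow, mul_sum]
  apply sum_congr rfl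
  intro s _
  rw [smul_eq_C_mul]
  simp only [map_mul, map_pow, map_natCast, C_eq_natCast]
  ring

/-- Evaluation of iterated derivatives of the kernel below order `n` vanishes. -/
lemma evalK_low (n m : ℕ) (hm : m < n) (c d : ℝ) :
    (derivative^[m] ((X - C c) ^ n * (X - C d) ^ n)).eval c = 0 := by
  rw [Kexp, iterate_derivative_sum, eval_finset_sum]
  apply sum_eq_zero
  intro s _
  rw [iterate_derivative_smul, iterate_derivative_X_sub_pow]
  rw [smul_eq_C_mul, eval_mul, eval_C, eval_smul, eval_pow, eval_sub, eval_X, eval_C]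
  rw [sub_self, zero_pow (by omega : n + s - m ≠ 0)]
  simp

/-- Evaluation of the `(n+r)`-th derivative of the kernel at `c`. -/
lemma evalK_mid (n r : ℕ) (hr : r ≤ n) (c d : ℝ) :
    (derivative^[n + r] ((X - C c) ^ n * (X - C d) ^ n)).eval c
      = (n.choose r : ℝ) * (c - d) ^ (n - r) * (n + r).factorial := by
  rw [Kexp, iterate_derivative_sum, eval_finset_sum]
  rw [Finset.sum_eq_single r]
  · rw [iterate_derivative_smul, iterate_derivative_X_sub_pow, Nat.sub_self, pow_zero]
    rw [Nat.descFactorial_self]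
    rw [smul_eq_C_mul, eval_mul, eval_C, eval_smul, eval_one]
    push_cast
    ring
  · intro s _ hs
    rw [iterate_derivative_smul, iterate_derivative_X_sub_pow]
    rcases lt_or_gt_of_ne hs with h | h
    · -- s < r : descFactorial is zero
      rw [Nat.descFactorial_eq_zero_iff_lt.mpr (by omega : n + s < n + r)]
      simp
    · -- s > r : positive power of (c - c)
      rw [smul_eq_C_mul, eval_mul, eval_C, eval_smul, eval_pow, eval_sub, eval_X, eval_C]
      rw [sub_self, zero_pow (by omega : n + s - (n + r) ≠ 0)]
      simp
  · intro h
    exact absurd (mem_range.mpr (by omega)) h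

/-- The `2n`-th derivative of the kernel is the constant `(2n)!`. -/
lemma K2n (n : ℕ) (c d : ℝ) :
    derivative^[2 * n] ((X - C c) ^ n * (X - C d) ^ n) = C (((2 * n).factorial : ℝ)) := by
  rw [Kexp, iterate_derivative_sum]
  rw [Finset.sum_eq_single n]
  · rw [iterate_derivative_smul, iterate_derivative_X_sub_pow]
    rw [show n + n - 2 * n = 0 by omega, pow_zero, show n + n = 2 * n by omega]
    rw [Nat.descFactorial_self, Nat.choose_self, Nat.sub_self, pow_zero]
    simp [smul_eq_C_mul, nsmul_eq_mul]
  · intro s hmem hs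
    have hs' : s < n + 1 := mem_range.mp hmem
    rw [iterate_derivative_smul, iterate_derivative_X_sub_pow]
    rw [Nat.descFactorial_eq_zero_iff_lt.mpr (by omega : n + s < 2 * n)]
    simp
  · intro h
    exact absurd (mem_range.mpr (by omega)) h

/-- FTC for polynomials. -/
lemma poly_ftc (p : ℝ[X]) (a b : ℝ) :
    ∫ x in a..b, (derivative p).eval x = p.eval b - p.eval a :=
  intervalIntegral.integral_eq_sub_of_hasDerivAt (fun x _ => p.hasDerivAt x)
    ((p.derivative.continuous_aeval ).intervalIntegrable _ _)

/-- The telescoped derivative of the bilinear concomitant. -/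
lemma G_derivative (n : ℕ) (K f : ℝ[X]) (hn : 1 ≤ n) (hf0 : derivative^[2*n] f = 0)
    (hK2n : derivative^[2*n] K = C (((2*n).factorial : ℝ))) :
    derivative (∑ i ∈ range (2*n), ((-1:ℝ)^i) • (derivative^[2*n-1-i] K * derivative^[i] f))
      = C (((2*n).factorial : ℝ)) * f := by
  set g : ℕ → ℝ[X] := fun i => ((-1:ℝ)^i) • (derivative^[2*n-i] K * derivative^[i] f) with hg
  rw [derivative_sum]
  have hterm : ∀ i ∈ range (2*n),
      derivative (((-1:ℝ)^i) • (derivative^[2*n-1-i] K * derivative^[i] f)) = g i - g (i+1) := by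
    intro i hi
    have hi' := mem_range.mp hi
    rw [derivative_smul, derivative_mul,
      ← Function.iterate_succ_apply' derivative (2*n-1-i) K,
      ← Function.iterate_succ_apply' derivative i f]
    simp only [Nat.succ_eq_add_one]
    rw [show 2*n-1-i+1 = 2*n-i by omega]
    simp only [hg]
    rw [show 2*n-(i+1) = 2*n-1-i by omega]
    rw [smul_add, pow_succ]
    rw [smul_eq_C_mul, smul_eq_C_mul, smul_eq_C_mul, map_mul, map_neg, map_one]
    ring
  rw [sum_congr rfl hterm, Finset.sum_range_sub' g (2*n)]
  simp only [hg]
  rw [Nat.sub_zero, Nat.sub_self, hf0, Function.iterate_zero_apply, mul_zero, smul_zero,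
    sub_zero, pow_zero, one_smul, hK2n]

/-- Closed form for the Hermite weight. -/
lemma wA_eq (n j : ℕ) (a b : ℝ) (hj : j < n) :
    wA n a b j = ((n.choose (n-1-j) : ℝ)) * ((2*n-1-j).factorial) / ((2*n).factorial)
      * (b-a)^(j+1) := by
  have hIcc : Finset.Icc j (n-1) = Finset.Ico j n := by
    ext k; simp only [mem_Icc, mem_Ico]; omega
  rw [wA, hIcc, Finset.sum_Ico_eq_sum_range]
  set i := j with hi
  set jd := n - 1 - j with hjd
  have hn : n = i + jd + 1 := by omega
  have hsum : ∑ t ∈ range (n - j), ((j + t).choose j : ℝ) * (n + (j + t) - j - 1).factorial /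
        (n + (j + t) + 1).factorial
      = ∑ t ∈ range (jd + 1), ((i + t).choose i : ℝ) * (i + jd + t).factorial /
        (2 * i + jd + t + 2).factorial := by
    rw [show n - j = jd + 1 by omega]
    apply sum_congr rfl
    intro t _
    rw [show n + (j + t) - j - 1 = i + jd + t by omega,
      show n + (j + t) + 1 = 2 * i + jd + t + 2 by omega]
  rw [hsum, key_sum jd i]
  have hch : ((n.choose (n-1-j) : ℝ)) = (i + jd + 1).factorial / ((jd.factorial) * ((i+1).factorial)) := by
    rw [show n - 1 - j = jd from rfl]
    rw [Nat.cast_choose ℝ (by omega : jd ≤ n), hn, show i + jd + 1 - jd = i + 1 by omega]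
  rw [hch, show (2*n-1-j : ℕ) = i + 2*jd + 1 by omega, show (2*n : ℕ) = 2*i + 2*jd + 2 by omega,
    show (n : ℝ) = ((i : ℝ) + jd + 1) by push_cast [hn]; ring]
  rw [show ((i + jd + 1).factorial : ℝ) = (i + jd + 1) * (i + jd).factorial from by
    rw [Nat.factorial_succ]; push_cast; ring]
  have h1 : ((jd.factorial : ℝ)) ≠ 0 := fact_ne _
  have h2 : (((i+1).factorial : ℝ)) ≠ 0 := fact_ne _
  have h3 : (((2*i+2*jd+2).factorial : ℝ)) ≠ 0 := fact_ne _
  field_simp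

/-- the Hermite quadrature rule is exact on polynomials of degree ≤ 2n-1. -/
theorem stmt13 (n : ℕ) (hn : 1 ≤ n) (a b : ℝ) (hab : a < b) :
    ∀ f : Polynomial ℝ, f.degree ≤ ((2 * n - 1 : ℕ) : WithBot ℕ) →
      ∫ x in a..b, f.eval x
        = (∑ j ∈ Finset.range n, wA n a b j * (Polynomial.derivative^[j] f).eval a)
          + (∑ j ∈ Finset.range n, wB n a b j * (Polynomial.derivative^[j] f).eval b) := by
  intro f hdeg
  have hND : f.natDegree < 2 * n := by
    have h1 : f.natDegree ≤ 2*n-1 := natDegree_le_iff_degree_le.mpr hdeg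
    omega
  have hf0 : derivative^[2*n] f = 0 := iterate_derivative_eq_zero hND
  set K : ℝ[X] := (X - C a)^n * (X - C b)^n with hK
  set G : ℝ[X] := ∑ i ∈ range (2*n), ((-1:ℝ)^i) • (derivative^[2*n-1-i] K * derivative^[i] f)
    with hG
  have hGd : derivative G = C (((2*n).factorial : ℝ)) * f := by
    rw [hG]
    exact G_derivative n K f hn hf0 (K2n n a b)
  have key1 : ((2*n).factorial : ℝ) * ∫ x in a..b, f.eval x = G.eval b - G.eval a := by
    have h := poly_ftc G a b
    rw [hGd] at h
    simp only [eval_mul, eval_C] at h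
    rw [← h, intervalIntegral.integral_const_mul]
  -- evaluate G at a
  have hGa : G.eval a = ∑ i ∈ range n,
      (-1:ℝ)^i * ((n.choose (n-1-i) : ℝ) * (a-b)^(i+1) * (2*n-1-i).factorial)
        * (derivative^[i] f).eval a := by
    rw [hG, eval_finset_sum, range_eq_Ico,
      ← Finset.sum_Ico_consecutive _ (Nat.zero_le n) (by omega : n ≤ 2*n)]
    have h2 : ∑ i ∈ Finset.Ico n (2*n),
        eval a (((-1:ℝ)^i) • (derivative^[2*n-1-i] K * derivative^[i] f)) = 0 := by
      apply sum_eq_zero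
      intro i hi
      have hi' := mem_Ico.mp hi
      simp only [smul_eq_C_mul, eval_mul, eval_C]
      rw [hK, evalK_low n (2*n-1-i) (by omega) a b]
      ring
    rw [h2, add_zero, range_eq_Ico]
    apply sum_congr rfl
    intro i hi
    have hi' := (mem_Ico.mp hi).2
    simp only [smul_eq_C_mul, eval_mul, eval_C]
    rw [hK, show 2*n-1-i = n + (n-1-i) by omega, evalK_mid n (n-1-i) (by omega) a b,
      show n - (n-1-i) = i+1 by omega, show n + (n-1-i) = 2*n-1-i by omega]
    ring
  -- evaluate G at b
  have hGb : G.eval b = ∑ i ∈ range n,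
      (-1:ℝ)^i * ((n.choose (n-1-i) : ℝ) * (b-a)^(i+1) * (2*n-1-i).factorial)
        * (derivative^[i] f).eval b := by
    have hKc : K = (X - C b)^n * (X - C a)^n := by rw [hK]; ring
    rw [hG, eval_finset_sum, range_eq_Ico,
      ← Finset.sum_Ico_consecutive _ (Nat.zero_le n) (by omega : n ≤ 2*n)]
    have h2 : ∑ i ∈ Finset.Ico n (2*n),
        eval b (((-1:ℝ)^i) • (derivative^[2*n-1-i] K * derivative^[i] f)) = 0 := by
      apply sum_eq_zero
      intro i hi
      have hi' := mem_Ico.mp hi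
      simp only [smul_eq_C_mul, eval_mul, eval_C]
      rw [hKc, evalK_low n (2*n-1-i) (by omega) b a]
      ring
    rw [h2, add_zero, range_eq_Ico]
    apply sum_congr rfl
    intro i hi
    have hi' := (mem_Ico.mp hi).2
    simp only [smul_eq_C_mul, eval_mul, eval_C]
    rw [hKc, show 2*n-1-i = n + (n-1-i) by omega, evalK_mid n (n-1-i) (by omega) b a,
      show n - (n-1-i) = i+1 by omega, show n + (n-1-i) = 2*n-1-i by omega]
    ring
  -- final assembly
  have hfac : ((2*n).factorial : ℝ) ≠ 0 := fact_ne _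
  have key2 : ∫ x in a..b, f.eval x = (((2*n).factorial : ℝ))⁻¹ * (G.eval b - G.eval a) := by
    rw [← key1, inv_mul_cancel_left₀ hfac]
  rw [key2, hGa, hGb, ← sum_sub_distrib, Finset.mul_sum, ← sum_add_distrib]
  apply sum_congr rfl
  intro j hj
  have hj' := mem_range.mp hj
  rw [wB, wA_eq n j a b hj']
  rw [show a - b = -(b-a) by ring,
    show ((-(b-a))^(j+1) : ℝ) = (-1)^(j+1) * (b-a)^(j+1) from neg_pow _ _]
  have hsq : ((-1:ℝ))^j * ((-1:ℝ))^j = 1 := by rw [← mul_pow]; norm_num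
  rw [div_eq_mul_inv]
  linear_combination (((2*n).factorial : ℝ))⁻¹ * (n.choose (n-1-j) : ℝ) *
    ((2*n-1-j).factorial : ℝ) * (b-a)^(j+1) * (derivative^[j] f).eval a * hsq
end
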